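/- arXiv:math/0506284 — 11 statements merged into one kernel-verified Lean document; each statement's English description precedes it below -/
import Mathlib

section
/- Let X be a reflexive Banach space of dimension greater than 1 and let T be a bounded linear operator on X. Then T has a non-trivial closed invariant subspace if and only if there exists a pair of compatible sequences for T. -/
open Filter Topology

private lemma aux_exists_limit {𝕜 : Type*} [RCLike 𝕜] (U : Ultrafilter ℕ) (c : ℕ → 𝕜) {C : ℝ}
    (hb : ∀ n, ‖c n‖ ≤ C) : ∃ a : 𝕜, Tendsto c U (𝓝 a) := by
  have h2 : (U.map c : Filter 𝕜) ≤ 𝓟 (Metric.closedBall (0:𝕜) C) := by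
    rw [Ultrafilter.coe_map, Filter.le_principal_iff, Filter.mem_map]
    refine Filter.univ_mem' fun n => ?_
    simpa [Metric.mem_closedBall, dist_eq_norm] using hb n
  obtain ⟨a, -, ha⟩ := (isCompact_closedBall (0:𝕜) C).ultrafilter_le_nhds (U.map c) h2
  exact ⟨a, by rwa [Ultrafilter.coe_map] at ha⟩

private lemma aux_ultra_ne_zero {𝕜 : Type*} [RCLike 𝕜] {c : ℕ → 𝕜} {C : ℝ}
    (hb : ∀ n, ‖c n‖ ≤ C) (h : ¬ Tendsto c atTop (𝓝 0)) :
    ∃ (U : Ultrafilter ℕ) (a : 𝕜), (U : Filter ℕ) ≤ atTop ∧ a ≠ 0 ∧ Tendsto c U (𝓝 a) := by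
  rw [Metric.tendsto_nhds] at h
  push_neg at h
  obtain ⟨δ, hδ, hfreq⟩ := h
  have hne : (atTop ⊓ 𝓟 {n | δ ≤ dist (c n) 0}).NeBot := by
    rw [← Filter.frequently_iff_neBot]
    exact (Filter.not_eventually.mp hfreq).mono (fun n hn => not_not.mp hn)
  set F := atTop ⊓ 𝓟 {n | δ ≤ dist (c n) 0} with hF
  let U := Ultrafilter.of F
  have hUF : (U : Filter ℕ) ≤ F := Ultrafilter.of_le F
  have hUtop : (U : Filter ℕ) ≤ atTop := hUF.trans inf_le_left
  obtain ⟨a, ha⟩ := aux_exists_limit U c hb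
  have hmem : ∀ᶠ n in (U : Filter ℕ), δ ≤ dist (c n) 0 := by
    have : (U : Filter ℕ) ≤ 𝓟 {n | δ ≤ dist (c n) 0} := hUF.trans inf_le_right
    exact Filter.le_principal_iff.mp this
  have hda : Tendsto (fun n => dist (c n) 0) U (𝓝 (dist a 0)) :=
    ha.dist tendsto_const_nhds
  have : δ ≤ dist a 0 := ge_of_tendsto hda hmem
  refine ⟨U, a, hUtop, fun h0 => ?_, ha⟩
  rw [h0, dist_self] at this; linarith

private lemma aux_limit_functional {𝕜 E : Type*} [RCLike 𝕜] [NormedAddCommGroup E]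
    [NormedSpace 𝕜 E] (U : Ultrafilter ℕ) (φ : ℕ → E →L[𝕜] 𝕜) {C : ℝ}
    (hb : ∀ n, ‖φ n‖ ≤ C) :
    ∃ f : E →L[𝕜] 𝕜, ∀ v, Tendsto (fun m => φ m v) U (𝓝 (f v)) := by
  have key : ∀ v : E, ∃ a : 𝕜, Tendsto (fun m => φ m v) U (𝓝 a) := fun v =>
    aux_exists_limit U _ (C := C * ‖v‖)
      (fun n => ((φ n).le_opNorm v).trans (by gcongr; exact hb n))
  choose a ha using key
  have hadd : ∀ v w, a (v + w) = a v + a w := by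
    intro v w
    have h1 := ha (v + w)
    simp only [map_add] at h1
    exact tendsto_nhds_unique h1 ((ha v).add (ha w))
  have hsmul : ∀ (s : 𝕜) (v : E), a (s • v) = s • a v := by
    intro s v
    have h1 := ha (s • v)
    simp only [map_smul] at h1
    exact tendsto_nhds_unique h1 ((ha v).const_smul s)
  let f₀ : E →ₗ[𝕜] 𝕜 :=
    { toFun := a, map_add' := hadd, map_smul' := hsmul }
  have hbound : ∀ v, ‖f₀ v‖ ≤ C * ‖v‖ := by
    intro v
    refine le_of_tendsto (ha v).norm (Filter.Eventually.of_forall fun m => ?_)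
    exact ((φ m).le_opNorm v).trans (by gcongr; exact hb m)
  refine ⟨f₀.mkContinuous (C) hbound, fun v => ha v⟩

/-- Two bounded sequences `(x n)` in `X` and `(xs n)` in `X*` are *compatible* for `T` if
(a) no subsequence of `(x n)` converges weakly to zero, (b) no subsequence of `(xs n)`
converges to zero in the weak topology of `X*`, and (c) there is a sequence of positive
reals `ε n → 0` with `|xs m (T^k (x l))| < ε m` for all `1 ≤ k ≤ l ≤ m`. -/
def IsCompatible {𝕜 X : Type*} [RCLike 𝕜] [NormedAddCommGroup X] [NormedSpace 𝕜 X]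
    (T : X →L[𝕜] X) (x : ℕ → X) (xs : ℕ → X →L[𝕜] 𝕜) : Prop :=
  (∃ C : ℝ, ∀ n, ‖x n‖ ≤ C) ∧
  (∃ C : ℝ, ∀ n, ‖xs n‖ ≤ C) ∧
  (¬ ∃ φ : ℕ → ℕ, StrictMono φ ∧
      ∀ f : X →L[𝕜] 𝕜, Tendsto (fun n => f (x (φ n))) atTop (𝓝 0)) ∧
  (¬ ∃ φ : ℕ → ℕ, StrictMono φ ∧
      ∀ F : (X →L[𝕜] 𝕜) →L[𝕜] 𝕜, Tendsto (fun n => F (xs (φ n))) atTop (𝓝 0)) ∧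
  (∃ ε : ℕ → ℝ, (∀ n, 0 < ε n) ∧ Tendsto ε atTop (𝓝 0) ∧
      ∀ k l m : ℕ, 1 ≤ k → k ≤ l → l ≤ m → ‖xs m ((T ^ k) (x l))‖ < ε m)

/-- Let `X` be a reflexive Banach space of dimension greater than 1 and `T` a bounded linear
operator on `X`.  Then `T` has a non-trivial closed invariant subspace if and only if there
exists a pair of compatible sequences for `T`. -/
theorem statement0 {𝕜 X : Type*} [RCLike 𝕜] [NormedAddCommGroup X] [NormedSpace 𝕜 X]
    [CompleteSpace X]
    (hrefl : Function.Surjective ⇑(NormedSpace.inclusionInDoubleDual 𝕜 X))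
    (hdim : 1 < Module.rank 𝕜 X) (T : X →L[𝕜] X) :
    (∃ Y : Submodule 𝕜 X, IsClosed (Y : Set X) ∧ Y ≠ ⊥ ∧ Y ≠ ⊤ ∧ ∀ y ∈ Y, T y ∈ Y) ↔
      (∃ (x : ℕ → X) (xs : ℕ → X →L[𝕜] 𝕜), IsCompatible T x xs) := by
  constructor
  · rintro ⟨Y, hYc, hYbot, hYtop, hYinv⟩
    haveI : IsClosed (Y : Set X) := hYc
    obtain ⟨y0, hy0Y, hy0ne⟩ := Submodule.exists_mem_ne_zero_of_ne_bot hYbot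
    obtain ⟨z, hzY⟩ : ∃ z : X, z ∉ Y := by
      by_contra h
      push_neg at h
      exact hYtop (Submodule.eq_top_iff'.mpr h)
    have hq : ∀ m : X, ‖Y.mkQ m‖ ≤ 1 * ‖m‖ := fun m => by
      simpa using Submodule.Quotient.norm_mk_le Y m
    let Q : X →L[𝕜] X ⧸ Y := Y.mkQ.mkContinuous 1 hq
    have hmkz : Submodule.Quotient.mk (p := Y) z ≠ 0 := by
      simpa [Submodule.Quotient.mk_eq_zero] using hzY
    obtain ⟨g, -, hg⟩ := exists_dual_vector 𝕜 (Submodule.Quotient.mk (p := Y) z) (norm_ne_zero_iff.mpr hmkz)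
    set f : X →L[𝕜] 𝕜 := g.comp Q with hfdef
    have hQ : ∀ v : X, Q v = Submodule.Quotient.mk (p := Y) v := fun v => rfl
    have hfY : ∀ v ∈ Y, f v = 0 := by
      intro v hv
      have h0 : Q v = 0 := by
        rw [hQ]
        simpa [Submodule.Quotient.mk_eq_zero] using hv
      simp [hfdef, ContinuousLinearMap.comp_apply, h0]
    have hfz : f z ≠ 0 := by
      have : f z = (‖Submodule.Quotient.mk (p := Y) z‖ : 𝕜) := by
        rw [hfdef]; simpa [ContinuousLinearMap.comp_apply, hQ] using hg
      rw [this]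
      simpa [RCLike.ofReal_eq_zero] using norm_ne_zero_iff.mpr hmkz
    have hTk : ∀ (k : ℕ) (v : X), v ∈ Y → (T ^ k) v ∈ Y := by
      intro k
      induction k with
      | zero => intro v hv; simpa using hv
      | succ n ih =>
        intro v hv
        rw [pow_succ, ContinuousLinearMap.mul_apply]
        exact ih _ (hYinv v hv)
    refine ⟨fun _ => y0, fun _ => f, ⟨‖y0‖, fun _ => le_rfl⟩, ⟨‖f‖, fun _ => le_rfl⟩, ?_, ?_, ?_⟩
    · rintro ⟨φ, -, hall⟩
      obtain ⟨g1, -, hg1⟩ := exists_dual_vector 𝕜 y0 (norm_ne_zero_iff.mpr hy0ne)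
      have h0 : g1 y0 = 0 := tendsto_nhds_unique tendsto_const_nhds (hall g1)
      rw [hg1] at h0
      exact hy0ne (norm_eq_zero.mp (RCLike.ofReal_eq_zero.mp h0))
    · rintro ⟨φ, -, hall⟩
      have h := hall (NormedSpace.inclusionInDoubleDual 𝕜 X z)
      have h' : Tendsto (fun _ : ℕ => f z) atTop (𝓝 0) := by
        simpa [NormedSpace.dual_def] using h
      exact hfz (tendsto_nhds_unique tendsto_const_nhds h')
    · refine ⟨fun n => ((n : ℝ) + 1)⁻¹, fun n => by positivity, ?_, ?_⟩
      · simpa only [one_div] using (tendsto_one_div_add_atTop_nhds_zero_nat :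
          Tendsto (fun n : ℕ => 1 / ((n : ℝ) + 1)) atTop (𝓝 0))
      · intro k l m hk hkl hlm
        have h0 : f ((T ^ k) y0) = 0 := hfY _ (hTk k y0 hy0Y)
        rw [h0]
        simp only [norm_zero]
        positivity
  · rintro ⟨x, xs, ⟨Cx, hCx⟩, ⟨Cs, hCs⟩, hax, hbx, ε, hεpos, hεlim, hεbnd⟩
    have hCx0 : 0 ≤ Cx := (norm_nonneg _).trans (hCx 0)
    -- f side
    obtain ⟨F₀, hF₀⟩ : ∃ F : (X →L[𝕜] 𝕜) →L[𝕜] 𝕜,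
        ¬ Tendsto (fun m => F (xs m)) atTop (𝓝 0) := by
      by_contra h
      push_neg at h
      exact hbx ⟨id, strictMono_id, fun F => h F⟩
    obtain ⟨z₀, hz₀⟩ := hrefl F₀
    have hc : ¬ Tendsto (fun m => xs m z₀) atTop (𝓝 0) := by
      intro h
      apply hF₀
      have he : ∀ m, F₀ (xs m) = xs m z₀ := fun m => by
        rw [← hz₀]; exact NormedSpace.dual_def _ _ _ _
      simpa [he] using h
    obtain ⟨U₂, a₂, hU₂, ha₂ne, ha₂⟩ := aux_ultra_ne_zero (C := Cs * ‖z₀‖)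
      (fun m => ((xs m).le_opNorm z₀).trans (by gcongr; exact hCs m)) hc
    obtain ⟨f, hf⟩ := aux_limit_functional U₂ xs hCs
    have hfz₀ : f z₀ = a₂ := tendsto_nhds_unique ((hf z₀).mono_left le_rfl) ha₂
    have hfne : f ≠ 0 := by
      intro h
      apply ha₂ne
      rw [← hfz₀, h]
      simp
    -- x side
    obtain ⟨g₀, hg₀⟩ : ∃ g : X →L[𝕜] 𝕜, ¬ Tendsto (fun l => g (x l)) atTop (𝓝 0) := by
      by_contra h
      push_neg at h
      exact hax ⟨id, strictMono_id, fun g => h g⟩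
    obtain ⟨U₁, a₁, hU₁, ha₁ne, ha₁⟩ := aux_ultra_ne_zero (C := ‖g₀‖ * Cx)
      (fun l => (g₀.le_opNorm (x l)).trans (by gcongr; exact hCx l)) hg₀
    obtain ⟨F, hF⟩ := aux_limit_functional U₁
      (fun l => NormedSpace.inclusionInDoubleDual 𝕜 X (x l)) (C := Cx)
      (fun l => (NormedSpace.double_dual_bound 𝕜 X (x l)).trans (hCx l))
    obtain ⟨xb, hxb⟩ := hrefl F
    have hxbg : ∀ g : X →L[𝕜] 𝕜, g xb = F g := fun g => by
      rw [← hxb]; exact (NormedSpace.dual_def _ _ _ _).symm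
    have hF' : ∀ g : X →L[𝕜] 𝕜, Tendsto (fun l => g (x l)) U₁ (𝓝 (F g)) := fun g => by
      simpa [NormedSpace.dual_def] using hF g
    have hxbne : xb ≠ 0 := by
      have hFg₀ : F g₀ = a₁ := tendsto_nhds_unique (hF' g₀) ha₁
      intro h
      apply ha₁ne
      rw [← hFg₀, ← hxbg g₀, h, map_zero]
    -- f annihilates T^k (x l)
    have hf0 : ∀ k l : ℕ, 1 ≤ k → k ≤ l → f ((T ^ k) (x l)) = 0 := by
      intro k l hk hkl
      have htt : Tendsto (fun m => xs m ((T ^ k) (x l))) atTop (𝓝 0) := by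
        apply squeeze_zero_norm' ?_ hεlim
        filter_upwards [Filter.eventually_ge_atTop l] with m hm
        exact (hεbnd k l m hk hkl hm).le
      exact tendsto_nhds_unique (hf _) (htt.mono_left hU₂)
    -- f annihilates T^(k+1) xb
    have hfxb : ∀ k : ℕ, f ((T ^ (k + 1)) xb) = 0 := by
      intro k
      have h1 : f ((T ^ (k + 1)) xb) = F (f.comp (T ^ (k + 1))) := hxbg (f.comp (T ^ (k + 1)))
      have h3 : Tendsto (fun l => f ((T ^ (k + 1)) (x l))) atTop (𝓝 0) := by
        refine Tendsto.congr' ?_ tendsto_const_nhds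
        filter_upwards [Filter.eventually_ge_atTop (k + 1)] with l hl
        exact (hf0 (k + 1) l (Nat.succ_le_succ (Nat.zero_le k)) hl).symm
      have h2 : Tendsto (fun l => f ((T ^ (k + 1)) (x l))) U₁ (𝓝 (F (f.comp (T ^ (k + 1))))) :=
        hF' (f.comp (T ^ (k + 1)))
      rw [h1]
      exact tendsto_nhds_unique h2 (h3.mono_left hU₁)
    by_cases hTxb : T xb = 0
    · by_cases hT0 : ∀ w : X, T w = 0
      · obtain ⟨g₁, -, hg₁⟩ := exists_dual_vector 𝕜 xb (norm_ne_zero_iff.mpr hxbne)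
        refine ⟨LinearMap.ker (g₁ : X →ₗ[𝕜] 𝕜), ContinuousLinearMap.isClosed_ker g₁, ?_, ?_, ?_⟩
        · intro hbot
          have hinj : Function.Injective g₁ := LinearMap.ker_eq_bot.mp hbot
          have hle := LinearMap.lift_rank_le_of_injective (g₁ : X →ₗ[𝕜] 𝕜) hinj
          rw [Module.rank_self] at hle
          have : Module.rank 𝕜 X ≤ 1 := by simpa using hle
          exact absurd hdim (not_lt.mpr this)
        · intro htop
          have hmem : xb ∈ LinearMap.ker (g₁ : X →ₗ[𝕜] 𝕜) := htop ▸ Submodule.mem_top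
          have : g₁ xb = 0 := LinearMap.mem_ker.mp hmem
          rw [hg₁] at this
          exact hxbne (norm_eq_zero.mp (RCLike.ofReal_eq_zero.mp this))
        · intro y _
          exact LinearMap.mem_ker.mpr (by rw [hT0 y, map_zero])
      · push_neg at hT0
        obtain ⟨w, hw⟩ := hT0
        refine ⟨LinearMap.ker (T : X →ₗ[𝕜] X), ContinuousLinearMap.isClosed_ker T, ?_, ?_, ?_⟩
        · intro hbot
          have hmem : xb ∈ LinearMap.ker (T : X →ₗ[𝕜] X) := LinearMap.mem_ker.mpr hTxb
          rw [hbot] at hmem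
          exact hxbne ((Submodule.mem_bot _).mp hmem)
        · intro htop
          exact hw (LinearMap.mem_ker.mp (htop ▸ Submodule.mem_top))
        · intro y hy
          exact LinearMap.mem_ker.mpr (by have hy' : T y = 0 := LinearMap.mem_ker.mp hy; rw [hy', map_zero])
    · set S : Set X := Set.range (fun k : ℕ => (T ^ (k + 1)) xb) with hSdef
      set Y : Submodule 𝕜 X := (Submodule.span 𝕜 S).topologicalClosure with hYdef
      have hTxbY : T xb ∈ Y := by
        apply Submodule.le_topologicalClosure
        apply Submodule.subset_span
        exact ⟨0, by simp [pow_one]⟩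
      refine ⟨Y, Submodule.isClosed_topologicalClosure _, ?_, ?_, ?_⟩
      · intro hbot
        rw [hbot] at hTxbY
        exact hTxb ((Submodule.mem_bot _).mp hTxbY)
      · intro htop
        obtain ⟨v, hv⟩ : ∃ v, f v ≠ 0 := by
          by_contra h
          push_neg at h
          exact hfne (ContinuousLinearMap.ext fun v => by simp [h v])
        apply hv
        have hYker : Y ≤ LinearMap.ker (f : X →ₗ[𝕜] 𝕜) := by
          apply Submodule.topologicalClosure_minimal
          · rw [Submodule.span_le]
            rintro _ ⟨k, rfl⟩
            exact LinearMap.mem_ker.mpr (hfxb k)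
          · exact ContinuousLinearMap.isClosed_ker f
        exact LinearMap.mem_ker.mp (hYker (htop ▸ Submodule.mem_top))
      · intro y hy
        have hle : Y ≤ Y.comap (T : X →ₗ[𝕜] X) := by
          apply Submodule.topologicalClosure_minimal
          · rw [Submodule.span_le]
            rintro _ ⟨k, rfl⟩
            simp only [SetLike.mem_coe, Submodule.mem_comap, ContinuousLinearMap.coe_coe]
            have hkk : T ((T ^ (k + 1)) xb) = (T ^ (k + 1 + 1)) xb := by
              rw [pow_succ' T (k + 1), ContinuousLinearMap.mul_apply]
            rw [hkk]
            exact Submodule.le_topologicalClosure _ (Submodule.subset_span ⟨k + 1, rfl⟩)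
          · exact (Submodule.isClosed_topologicalClosure _).preimage T.continuous
        exact Submodule.mem_comap.mp (hle hy)
end

section
/- Let X be a reflexive Banach space of dimension greater than 1, T a bounded linear operator on X, and suppose there exist compatible sequences (x_n)_{n∈ℕ} ⊆ X and (x_n^*)_{n∈ℕ} ⊆ X^* for T. Then T has a non-trivial closed invariant subspace. -/
open Filter Topology


/-- A nonzero functional vanishing on a proper closed subspace. -/
lemma aux_exists_dual_annihilator {𝕜 X : Type*} [RCLike 𝕜] [NormedAddCommGroup X]
    [NormedSpace 𝕜 X] (Z : Submodule 𝕜 X) (h : IsClosed (Z : Set X)) (x₁ : X) (h1 : x₁ ∉ Z) :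
    ∃ f : X →L[𝕜] 𝕜, f x₁ ≠ 0 ∧ ∀ z ∈ Z, f z = 0 := by
  haveI := h
  have hq0 : (Submodule.Quotient.mk x₁ : X ⧸ Z) ≠ 0 := by
    simpa [Submodule.Quotient.mk_eq_zero] using h1
  obtain ⟨g, hg1, hgx⟩ := exists_dual_vector 𝕜 _ (norm_ne_zero_iff.2 hq0)
  let π : X →L[𝕜] X ⧸ Z := LinearMap.mkContinuous Z.mkQ 1
    (fun m => by simpa [one_mul] using Submodule.Quotient.norm_mk_le (S := Z) m)
  refine ⟨g.comp π, ?_, ?_⟩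
  · have : g.comp π x₁ = (‖(Submodule.Quotient.mk x₁ : X ⧸ Z)‖ : 𝕜) := by
      simpa [π] using hgx
    rw [this]
    simpa [RCLike.ofReal_eq_zero, norm_eq_zero] using hq0
  · intro z hz
    have : π z = 0 := by
      simpa [π, Submodule.Quotient.mk_eq_zero] using hz
    simp [this]

/-- The set of points where a uniformly bounded sequence of functionals tends to zero
is a closed submodule; hence it contains the closed span of any set of points on which
the functionals tend to zero. -/
lemma aux_tendsto_on_closure {𝕜 X : Type*} [RCLike 𝕜] [NormedAddCommGroup X]
    [NormedSpace 𝕜 X] (xs : ℕ → X →L[𝕜] 𝕜) (C : ℝ) (hC : ∀ n, ‖xs n‖ ≤ C)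
    (S : Set X) (hS : ∀ z ∈ S, Tendsto (fun m => xs m z) atTop (𝓝 (0 : 𝕜)))
    {y : X} (hy : y ∈ (Submodule.span 𝕜 S).topologicalClosure) :
    Tendsto (fun m => xs m y) atTop (𝓝 (0 : 𝕜)) := by
  have hC0 : (0:ℝ) ≤ C := le_trans (norm_nonneg _) (hC 0)
  have hVclosed : IsClosed {y : X | Tendsto (fun m => xs m y) atTop (𝓝 (0:𝕜))} := by
    apply isClosed_of_closure_subset
    intro y hy
    rw [Set.mem_setOf_eq, NormedAddCommGroup.tendsto_nhds_zero]
    intro δ hδ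
    obtain ⟨v, hvmem, hyv⟩ := Metric.mem_closure_iff.1 hy (δ / (2 * (C + 1))) (by positivity)
    have hv := NormedAddCommGroup.tendsto_nhds_zero.1 hvmem (δ / 2) (by positivity)
    filter_upwards [hv] with m hm
    have h1 : xs m y = xs m (y - v) + xs m v := by rw [map_sub]; ring
    have h3 : ‖y - v‖ ≤ δ / (2 * (C + 1)) := by
      rw [← dist_eq_norm]; exact hyv.le
    have h2 : ‖xs m (y - v)‖ ≤ C * (δ / (2 * (C + 1))) :=
      le_trans ((xs m).le_opNorm _) (mul_le_mul (hC m) h3 (norm_nonneg _) hC0)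
    have h4 : C * (δ / (2 * (C + 1))) ≤ δ / 2 := by
      calc C * (δ / (2 * (C + 1))) ≤ (C + 1) * (δ / (2 * (C + 1))) := by
            apply mul_le_mul_of_nonneg_right (by linarith) (by positivity)
        _ = δ / 2 := by field_simp
    calc ‖xs m y‖ ≤ ‖xs m (y - v)‖ + ‖xs m v‖ := by rw [h1]; exact norm_add_le _ _
      _ < δ := by linarith
  set V : Submodule 𝕜 X :=
    { carrier := {y : X | Tendsto (fun m => xs m y) atTop (𝓝 (0:𝕜))}
      add_mem' := fun {a b} ha hb => by
        have := ha.add hb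
        simpa using this
      zero_mem' := by simpa using (tendsto_const_nhds : Tendsto (fun _ : ℕ => (0:𝕜)) atTop _)
      smul_mem' := fun c a ha => by
        have := ha.const_mul c
        simpa [smul_eq_mul] using this } with hV
  have hle : (Submodule.span 𝕜 S).topologicalClosure ≤ V :=
    Submodule.topologicalClosure_minimal _ (Submodule.span_le.2 hS) hVclosed
  exact hle hy


lemma aux_exists_clusterPt_ne {W : Type*} [TopologicalSpace W] {K : Set W}
    (hK : IsCompact K) (u : ℕ → W) (hu : ∀ n, u n ∈ K) {a : W}
    (h : ¬ Tendsto u atTop (𝓝 a)) :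
    ∃ G, G ≠ a ∧ ClusterPt G (map u atTop) := by
  simp only [Filter.tendsto_def, not_forall] at h
  obtain ⟨U, hU, hnot⟩ := h
  obtain ⟨V, hVU, hVopen, hV0⟩ := mem_nhds_iff.1 hU
  have hnot' : ¬ (∀ᶠ n in atTop, u n ∈ U) := hnot
  have hfreq : ∃ᶠ n in atTop, u n ∈ Vᶜ :=
    (Filter.not_eventually.1 hnot').mono fun n hn hv => hn (hVU hv)
  haveI hne : (atTop ⊓ 𝓟 {n | u n ∈ Vᶜ}).NeBot := Filter.frequently_iff_neBot.1 hfreq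
  set F' : Filter W := map u (atTop ⊓ 𝓟 {n | u n ∈ Vᶜ}) with hF'
  haveI : F'.NeBot := hne.map u
  have hFK : F' ≤ 𝓟 K := by
    calc F' ≤ map u atTop := map_mono inf_le_left
      _ ≤ 𝓟 K := le_principal_iff.2 (mem_map.2 (Eventually.of_forall hu))
  obtain ⟨G, hGK, hGF⟩ := hK.exists_clusterPt hFK
  have hFV : F' ≤ 𝓟 Vᶜ := by
    calc F' ≤ map u (𝓟 {n | u n ∈ Vᶜ}) := map_mono inf_le_right
      _ = 𝓟 (u '' {n | u n ∈ Vᶜ}) := map_principal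
      _ ≤ 𝓟 Vᶜ := principal_mono.2 (by rintro _ ⟨n, hn, rfl⟩; exact hn)
  have hGV : G ∈ Vᶜ := by
    have := mem_closure_iff_clusterPt.2 (hGF.mono hFV)
    rwa [hVopen.isClosed_compl.closure_eq] at this
  exact ⟨G, fun hGa => hGV (hGa ▸ hV0), hGF.mono (map_mono inf_le_left)⟩

lemma aux_clusterPt_eventually_eq {α : Type*} [TopologicalSpace α] [T1Space α]
    {u : ℕ → α} {a b : α} (hcl : ClusterPt a (map u atTop))
    (h : ∀ᶠ n in atTop, u n = b) : a = b := by
  have hle : map u atTop ≤ 𝓟 {b} := le_principal_iff.2 (mem_map.2 (h.mono fun n hn => hn))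
  have := mem_closure_iff_clusterPt.2 (hcl.mono hle)
  simpa using this

/-- If `X` is a reflexive Banach space of dimension greater than 1, `T` a bounded operator
on `X`, and there exist compatible sequences for `T`, then `T` has a non-trivial closed
invariant subspace. -/
theorem statement1 {𝕜 X : Type*} [RCLike 𝕜] [NormedAddCommGroup X] [NormedSpace 𝕜 X]
    [CompleteSpace X]
    (hrefl : Function.Surjective ⇑(NormedSpace.inclusionInDoubleDual 𝕜 X))
    (hdim : 1 < Module.rank 𝕜 X) (T : X →L[𝕜] X)
    (x : ℕ → X) (xs : ℕ → X →L[𝕜] 𝕜) (hcomp : IsCompatible T x xs) :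
    ∃ Y : Submodule 𝕜 X, IsClosed (Y : Set X) ∧ Y ≠ ⊥ ∧ Y ≠ ⊤ ∧ ∀ y ∈ Y, T y ∈ Y := by
  classical
  obtain ⟨⟨C1, hC1⟩, ⟨C2, hC2⟩, ha, hb, ε, hεpos, hεlim, hεbd⟩ := hcomp
  set J := NormedSpace.inclusionInDoubleDual 𝕜 X with hJdef
  set S₀ : Set X := {z | ∃ k l : ℕ, 1 ≤ k ∧ k ≤ l ∧ z = (T ^ k) (x l)} with hS₀def
  set Z : Submodule 𝕜 X := (Submodule.span 𝕜 S₀).topologicalClosure with hZdef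
  have hZclosed : IsClosed (Z : Set X) := Submodule.isClosed_topologicalClosure _
  -- every point of `Z` is annihilated in the limit by `(xs m)`
  have hgen : ∀ z ∈ S₀, Tendsto (fun m => xs m z) atTop (𝓝 (0:𝕜)) := by
    rintro z ⟨k, l, hk, hkl, rfl⟩
    apply squeeze_zero_norm' _ hεlim
    filter_upwards [eventually_ge_atTop l] with m hm
    exact (hεbd k l m hk hkl hm).le
  have hZV : ∀ y ∈ Z, Tendsto (fun m => xs m y) atTop (𝓝 (0:𝕜)) := fun y hy =>
    aux_tendsto_on_closure xs (max C2 0) (fun n => le_max_of_le_left (hC2 n)) S₀ hgen hy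
  by_cases hZtop : Z = ⊤
  · -- impossible: `xs` would converge weakly to zero
    exfalso
    apply hb
    refine ⟨id, strictMono_id, fun F => ?_⟩
    obtain ⟨y, hy⟩ := hrefl F
    have h0 := hZV y (by simp [hZtop])
    have heq : (fun n => F (xs (id n))) = fun m => xs m y := by
      funext n
      rw [← hy]
      rfl
    rw [heq]
    exact h0
  · -- pick a functional annihilating `Z`
    obtain ⟨x₁, hx₁⟩ : ∃ x₁ : X, x₁ ∉ Z := by
      by_contra h
      push_neg at h
      exact hZtop (Submodule.eq_top_iff'.2 h)
    obtain ⟨f, hfx₁, hfZ⟩ := aux_exists_dual_annihilator Z hZclosed x₁ hx₁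
    -- work in the weak-star topology on the double dual
    set u : ℕ → WeakDual 𝕜 (StrongDual 𝕜 X) :=
      fun n => StrongDual.toWeakDual (J (x n)) with hudef
    set C₁ := max C1 0 with hC₁def
    have hu : ∀ n, u n ∈ (WeakDual.toStrongDual ⁻¹'
        Metric.closedBall (0 : StrongDual 𝕜 (StrongDual 𝕜 X)) C₁) := by
      intro n
      have : ‖J (x n)‖ ≤ C₁ :=
        le_trans (NormedSpace.double_dual_bound 𝕜 X (x n)) (le_max_of_le_left (hC1 n))
      show WeakDual.toStrongDual (u n) ∈ Metric.closedBall (0 : StrongDual 𝕜 (StrongDual 𝕜 X)) C₁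
      exact Metric.mem_closedBall.2 ((dist_zero_right (J (x n))).trans_le this)
    have hK : IsCompact (WeakDual.toStrongDual ⁻¹'
        Metric.closedBall (0 : StrongDual 𝕜 (StrongDual 𝕜 X)) C₁) :=
      WeakDual.isCompact_closedBall 0 C₁
    have htend : ¬ Tendsto u atTop (𝓝 0) := by
      intro htend
      apply ha
      refine ⟨id, strictMono_id, fun g => ?_⟩
      have := ((WeakDual.eval_continuous (𝕜 := 𝕜) (E := StrongDual 𝕜 X) g).tendsto 0).comp htend
      exact this
    obtain ⟨G, hG0, hGcl⟩ := aux_exists_clusterPt_ne hK u hu htend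
    obtain ⟨y₀, hy₀⟩ := hrefl (WeakDual.toStrongDual G)
    have hy₀ne : y₀ ≠ 0 := by
      intro h
      apply hG0
      have h0 : WeakDual.toStrongDual G = 0 := by rw [← hy₀, h, map_zero]
      exact (LinearEquiv.map_eq_zero_iff _).1 h0
    -- f vanishes on the forward orbit of y₀
    have hvanish : ∀ k : ℕ, 1 ≤ k → f ((T ^ k) y₀) = 0 := by
      intro k hk
      set g' : StrongDual 𝕜 X := f.comp (T ^ k) with hg'def
      have hclus : ClusterPt (G g') (map (fun n => u n g') atTop) := by
        have h1 : ClusterPt (G g') (map (fun w : WeakDual 𝕜 (StrongDual 𝕜 X) => w g')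
            (map u atTop)) :=
          hGcl.map (WeakDual.eval_continuous g').continuousAt tendsto_map
        rwa [Filter.map_map] at h1
      have hev : ∀ᶠ n in atTop, (fun n => u n g') n = (0:𝕜) := by
        filter_upwards [eventually_ge_atTop k] with n hn
        have hmem : (T ^ k) (x n) ∈ Z :=
          Submodule.le_topologicalClosure _ (Submodule.subset_span ⟨k, n, hk, hn, rfl⟩)
        have : u n g' = f ((T ^ k) (x n)) := rfl
        rw [this]
        exact hfZ _ hmem
      have hGg : G g' = 0 := aux_clusterPt_eventually_eq hclus hev
      have : G g' = f ((T ^ k) y₀) := by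
        have h2 : G g' = (WeakDual.toStrongDual G) g' := rfl
        rw [h2, ← hy₀]
        rfl
      rwa [this] at hGg
    -- construct the invariant subspace
    by_cases hTy : T y₀ = 0
    · refine ⟨Submodule.span 𝕜 {y₀}, Submodule.closed_of_finiteDimensional _, ?_, ?_, ?_⟩
      · simpa [Submodule.span_singleton_eq_bot] using hy₀ne
      · intro h
        have h1 := rank_span_le (R := 𝕜) ({y₀} : Set X)
        rw [h] at h1
        rw [rank_top, Cardinal.mk_singleton] at h1
        exact absurd h1 (not_le_of_gt hdim)
      · intro y hy
        obtain ⟨c, rfl⟩ := Submodule.mem_span_singleton.1 hy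
        rw [map_smul, hTy, smul_zero]
        exact Submodule.zero_mem _
    · set S₁ : Set X := {z | ∃ k : ℕ, 1 ≤ k ∧ z = (T ^ k) y₀} with hS₁def
      have hTS₁ : ∀ z ∈ Submodule.span 𝕜 S₁, T z ∈ Submodule.span 𝕜 S₁ := by
        intro z hz
        have : Submodule.map (T : X →ₗ[𝕜] X) (Submodule.span 𝕜 S₁) ≤ Submodule.span 𝕜 S₁ := by
          rw [Submodule.map_span]
          apply Submodule.span_mono
          rintro _ ⟨_, ⟨k, hk, rfl⟩, rfl⟩
          exact ⟨k + 1, le_trans hk (Nat.le_succ k), by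
            rw [pow_succ']
            rfl⟩
        exact this ⟨z, hz, rfl⟩
      refine ⟨(Submodule.span 𝕜 S₁).topologicalClosure,
        Submodule.isClosed_topologicalClosure _, ?_, ?_, ?_⟩
      · intro h
        apply hTy
        have hmem : T y₀ ∈ (Submodule.span 𝕜 S₁).topologicalClosure :=
          Submodule.le_topologicalClosure _
            (Submodule.subset_span ⟨1, le_refl 1, by rw [pow_one]⟩)
        rw [h] at hmem
        simpa using hmem
      · intro h
        have hker : (Submodule.span 𝕜 S₁).topologicalClosure ≤ LinearMap.ker (f : X →ₗ[𝕜] 𝕜) := by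
          apply Submodule.topologicalClosure_minimal
          · apply Submodule.span_le.2
            rintro _ ⟨k, hk, rfl⟩
            exact LinearMap.mem_ker.2 (hvanish k hk)
          · exact ContinuousLinearMap.isClosed_ker f
        rw [h] at hker
        exact hfx₁ (hker (Submodule.mem_top) : f x₁ = 0)
      · intro y hy
        have hyc : y ∈ closure (Submodule.span 𝕜 S₁ : Set X) := hy
        have := map_mem_closure T.continuous hyc hTS₁
        exact this
end

section
/- Let X be a reflexive Banach space, T a bounded linear operator on X, and let (x_n)_{n∈ℕ} ⊆ X and (x_n^*)_{n∈ℕ} ⊆ X^* be compatible sequences for T. Then there exist v ∈ X with v ≠ 0 and v^* ∈ X^* with v^* ≠ 0 such that v^*(T^k v) = 0 for all integers k ≥ 1. -/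
open Filter Topology

lemma aux_cluster {𝕜 E : Type*} [RCLike 𝕜] [NormedAddCommGroup E] [NormedSpace 𝕜 E]
    (g : ℕ → WeakDual 𝕜 E) (C : ℝ) (hg : ∀ n, ‖WeakDual.toStrongDual (g n)‖ ≤ C)
    (h : ¬ Tendsto g atTop (𝓝 0)) :
    ∃ (Φ : WeakDual 𝕜 E) (U : Ultrafilter ℕ), Φ ≠ 0 ∧ (U : Filter ℕ) ≤ atTop ∧
      Tendsto g U (𝓝 Φ) := by
  rw [not_tendsto_iff_exists_frequently_notMem] at h
  obtain ⟨s, hs, hfreq⟩ := h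
  obtain ⟨t, hts, htopen, ht0⟩ := mem_nhds_iff.mp hs
  have hfreq' : ∃ᶠ n in atTop, g n ∉ t := hfreq.mono fun n hn h' => hn (hts h')
  have hL : ((atTop : Filter ℕ) ⊓ 𝓟 {n | g n ∉ t}).NeBot := frequently_iff_neBot.mp hfreq'
  set L := (atTop : Filter ℕ) ⊓ 𝓟 {n | g n ∉ t} with hLdef
  set K : Set (WeakDual 𝕜 E) := WeakDual.toStrongDual ⁻¹' Metric.closedBall 0 C with hK
  have hKc : IsCompact K := WeakDual.isCompact_closedBall (𝕜 := 𝕜) (0 : StrongDual 𝕜 E) C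
  have hmem : ∀ n, g n ∈ K := by
    intro n
    simp only [hK, Set.mem_preimage, Metric.mem_closedBall, dist_zero_right]
    exact hg n
  have hle : map g L ≤ 𝓟 K :=
    tendsto_principal.mpr (Eventually.of_forall hmem) |>.mono_left inf_le_left
  obtain ⟨Φ, hΦK, hcl⟩ := hKc.exists_clusterPt hle
  have hΦt : Φ ∉ t := by
    have h1 : map g L ≤ 𝓟 tᶜ := by
      refine le_trans (map_mono inf_le_right) ?_
      rw [map_principal, principal_mono]
      rintro y ⟨n, hn, rfl⟩
      exact hn
    have := (hcl.mono h1)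
    rw [← mem_closure_iff_clusterPt] at this
    rwa [htopen.isClosed_compl.closure_eq] at this
  obtain ⟨U, hUL, hUΦ⟩ := mapClusterPt_iff_ultrafilter.mp hcl
  exact ⟨Φ, U, fun h0 => hΦt (h0 ▸ ht0), hUL.trans inf_le_left, hUΦ⟩

theorem private_statement3_aux {𝕜 X : Type*} [RCLike 𝕜] [NormedAddCommGroup X] [NormedSpace 𝕜 X]
    [CompleteSpace X]
    (hrefl : Function.Surjective ⇑(NormedSpace.inclusionInDoubleDual 𝕜 X))
    (T : X →L[𝕜] X)
    (x : ℕ → X) (xs : ℕ → X →L[𝕜] 𝕜)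
    (hbx : ∃ C : ℝ, ∀ n, ‖x n‖ ≤ C)
    (hbs : ∃ C : ℝ, ∀ n, ‖xs n‖ ≤ C)
    (hc : ¬ ∃ φ : ℕ → ℕ, StrictMono φ ∧
      ∀ f : X →L[𝕜] 𝕜, Tendsto (fun n => f (x (φ n))) atTop (𝓝 0))
    (hd : ¬ ∃ φ : ℕ → ℕ, StrictMono φ ∧
      ∀ F : (X →L[𝕜] 𝕜) →L[𝕜] 𝕜, Tendsto (fun n => F (xs (φ n))) atTop (𝓝 0))
    (ε : ℕ → ℝ) (hε0 : Tendsto ε atTop (𝓝 0))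
    (hεb : ∀ k l m : ℕ, 1 ≤ k → k ≤ l → l ≤ m → ‖xs m ((T ^ k) (x l))‖ < ε m) :
    ∃ (v : X) (vs : X →L[𝕜] 𝕜), v ≠ 0 ∧ vs ≠ 0 ∧
      ∀ k : ℕ, 1 ≤ k → vs ((T ^ k) v) = 0 := by
  obtain ⟨Cx, hCx⟩ := hbx
  obtain ⟨Cs, hCs⟩ := hbs
  set J := NormedSpace.inclusionInDoubleDual 𝕜 X with hJ
  -- dual-side cluster point
  set gs : ℕ → WeakDual 𝕜 X := fun n => StrongDual.toWeakDual (xs n) with hgs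
  have hgsb : ∀ n, ‖WeakDual.toStrongDual (gs n)‖ ≤ Cs := hCs
  have hgsnt : ¬ Tendsto gs atTop (𝓝 0) := by
    intro hT
    refine hd ⟨id, strictMono_id, fun F => ?_⟩
    obtain ⟨y, rfl⟩ := hrefl F
    have := (WeakDual.eval_continuous (𝕜 := 𝕜) (E := X) y).continuousAt.tendsto.comp hT
    exact this
  obtain ⟨Φ₂, U₂, hΦ₂ne, hU₂le, hU₂⟩ := aux_cluster gs Cs hgsb hgsnt
  set vs : X →L[𝕜] 𝕜 := WeakDual.toStrongDual Φ₂ with hvs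
  have hvsne : vs ≠ 0 := fun h0 => hΦ₂ne (by simpa [hvs] using h0)
  have hvs_eval : ∀ y : X, Tendsto (fun m => xs m y) (U₂ : Filter ℕ) (𝓝 (vs y)) := fun y =>
    (WeakDual.eval_continuous (𝕜 := 𝕜) (E := X) y).continuousAt.tendsto.comp hU₂
  -- primal-side cluster point
  set gx : ℕ → WeakDual 𝕜 (X →L[𝕜] 𝕜) := fun n => StrongDual.toWeakDual (J (x n)) with hgx
  have hgxb : ∀ n, ‖WeakDual.toStrongDual (gx n)‖ ≤ Cx := fun n =>
    (NormedSpace.double_dual_bound 𝕜 X (x n)).trans (hCx n)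
  have hgxnt : ¬ Tendsto gx atTop (𝓝 0) := by
    intro hT
    refine hc ⟨id, strictMono_id, fun f => ?_⟩
    have := (WeakDual.eval_continuous (𝕜 := 𝕜) (E := (X →L[𝕜] 𝕜)) f).continuousAt.tendsto.comp hT
    exact this
  obtain ⟨Φ₁, U₁, hΦ₁ne, hU₁le, hU₁⟩ := aux_cluster gx Cx hgxb hgxnt
  obtain ⟨v, hv⟩ := hrefl (WeakDual.toStrongDual Φ₁)
  have hvne : v ≠ 0 := by
    rintro rfl
    apply hΦ₁ne
    have : WeakDual.toStrongDual Φ₁ = 0 := by rw [← hv]; simp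
    simpa using congrArg StrongDual.toWeakDual this
  have hv_eval : ∀ f : X →L[𝕜] 𝕜, Tendsto (fun l => f (x l)) (U₁ : Filter ℕ) (𝓝 (f v)) := by
    intro f
    have h1 := (WeakDual.eval_continuous (𝕜 := 𝕜) (E := (X →L[𝕜] 𝕜)) f).continuousAt.tendsto.comp hU₁
    have h2 : Φ₁ f = f v := by
      have := congrFun (congrArg (fun (g : StrongDual 𝕜 (StrongDual 𝕜 X)) => (g : (X →L[𝕜] 𝕜) → 𝕜)) hv) f
      simpa [hJ, NormedSpace.dual_def] using this.symm
    rw [h2] at h1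
    exact h1
  -- step 1: vs (T^k (x l)) = 0 for 1 ≤ k ≤ l
  have step1 : ∀ k l : ℕ, 1 ≤ k → k ≤ l → vs ((T ^ k) (x l)) = 0 := by
    intro k l hk hkl
    have h1 : Tendsto (fun m => xs m ((T ^ k) (x l))) (U₂ : Filter ℕ) (𝓝 (vs ((T ^ k) (x l)))) :=
      hvs_eval _
    have h2 : Tendsto (fun m => xs m ((T ^ k) (x l))) atTop (𝓝 0) := by
      refine squeeze_zero_norm' ?_ hε0
      filter_upwards [eventually_ge_atTop l] with m hm
      exact (hεb k l m hk hkl hm).le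
    exact tendsto_nhds_unique h1 (h2.mono_left hU₂le)
  refine ⟨v, vs, hvne, hvsne, fun k hk => ?_⟩
  have h1 : Tendsto (fun l => (vs.comp (T ^ k)) (x l)) (U₁ : Filter ℕ) (𝓝 ((vs.comp (T ^ k)) v)) :=
    hv_eval _
  have h2 : Tendsto (fun l => (vs.comp (T ^ k)) (x l)) (U₁ : Filter ℕ) (𝓝 0) := by
    have : ∀ᶠ l in (U₁ : Filter ℕ), (vs.comp (T ^ k)) (x l) = 0 := by
      filter_upwards [hU₁le (eventually_ge_atTop k)] with l hl
      simpa using step1 k l hk hl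
    exact Tendsto.congr' (this.mono fun l hl => hl.symm) tendsto_const_nhds
  have := tendsto_nhds_unique h1 h2
  simpa using this

/-- If `X` is a reflexive Banach space, `T` a bounded operator on `X`, and `(x n)`, `(xs n)`
are compatible sequences for `T`, then there exist nonzero `v ∈ X` and `v* ∈ X*` with
`v*(T^k v) = 0` for all integers `k ≥ 1`. -/
theorem statement3 {𝕜 X : Type*} [RCLike 𝕜] [NormedAddCommGroup X] [NormedSpace 𝕜 X]
    [CompleteSpace X]
    (hrefl : Function.Surjective ⇑(NormedSpace.inclusionInDoubleDual 𝕜 X))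
    (T : X →L[𝕜] X)
    (x : ℕ → X) (xs : ℕ → X →L[𝕜] 𝕜) (hcomp : IsCompatible T x xs) :
    ∃ (v : X) (vs : X →L[𝕜] 𝕜), v ≠ 0 ∧ vs ≠ 0 ∧
      ∀ k : ℕ, 1 ≤ k → vs ((T ^ k) v) = 0 := by
  obtain ⟨hbx, hbs, hc, hd, ε, _, hε0, hεb⟩ := hcomp
  exact private_statement3_aux hrefl T x xs hbx hbs hc hd ε hε0 hεb
end

section
/- Let X be a Banach space, let A be a nonempty closed convex bounded subset of X which does not contain the origin and has nonempty norm interior, and let x_0 be a point of the norm interior of A. Define B = {x^* ∈ X^* : Re x^*(x) ≥ 0 for all x ∈ A, and Re x^*(x_0) = 1}. Then B is nonempty, norm-bounded, and closed in the weak* topology of X^*. -/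
open RCLike Metric Set

section aux

variable {𝕜 X : Type*} [RCLike 𝕜] [NormedAddCommGroup X] [NormedSpace 𝕜 X]
    [NormedSpace ℝ X] [IsScalarTower ℝ 𝕜 X]

lemma clm_extend_re (fr : X →L[ℝ] ℝ) (x : X) :
    RCLike.re ((fr.extendTo𝕜' : X →L[𝕜] 𝕜) x) = fr x :=
  LinearMap.extendTo𝕜'_apply_re fr.toLinearMap x

end aux

/-- Let `X` be a Banach space, `A` a nonempty closed convex bounded subset of `X` not
containing the origin and with nonempty norm interior, and `x₀` a point of the norm interior
of `A`.  Then `B = {x* ∈ X* : Re x*(x) ≥ 0 for all x ∈ A, and Re x*(x₀) = 1}` is nonempty,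
norm-bounded, and closed in the weak* topology of `X*`. -/
theorem statement5 {𝕜 X : Type*} [RCLike 𝕜] [NormedAddCommGroup X] [NormedSpace 𝕜 X]
    [NormedSpace ℝ X] [IsScalarTower ℝ 𝕜 X] [CompleteSpace X]
    (A : Set X) (hne : A.Nonempty) (hclosed : IsClosed A) (hconv : Convex ℝ A)
    (hbdd : Bornology.IsBounded A) (h0 : (0 : X) ∉ A)
    (x0 : X) (hx0 : x0 ∈ interior A)
    (B : Set (X →L[𝕜] 𝕜))
    (hB : B = {f : X →L[𝕜] 𝕜 | (∀ x ∈ A, 0 ≤ RCLike.re (f x)) ∧ RCLike.re (f x0) = 1}) :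
    B.Nonempty ∧ Bornology.IsBounded B ∧
      IsClosed (StrongDual.toWeakDual '' B : Set (WeakDual 𝕜 X)) := by
  have hx0A : x0 ∈ A := interior_subset hx0
  -- Nonemptiness via Hahn–Banach separation
  obtain ⟨g, u, hgu, hg⟩ := _root_.geometric_hahn_banach_point_closed hconv hclosed h0
  rw [map_zero] at hgu
  have hgx0 : 0 < g x0 := hgu.trans (hg x0 hx0A)
  have hnonempty : B.Nonempty := by
    set gr : X →L[ℝ] ℝ := (g x0)⁻¹ • g with hgr
    refine ⟨(gr.extendTo𝕜' : X →L[𝕜] 𝕜), ?_⟩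
    rw [hB]
    constructor
    · intro x hx
      rw [clm_extend_re]
      simp only [hgr, ContinuousLinearMap.smul_apply, smul_eq_mul]
      exact le_of_lt (mul_pos (inv_pos.2 hgx0) (hgu.trans (hg x hx)))
    · rw [clm_extend_re]
      simp [hgr, inv_mul_cancel₀ hgx0.ne']
  refine ⟨hnonempty, ?_, ?_⟩
  · -- Boundedness
    obtain ⟨ε, hε, hball⟩ := Metric.isOpen_iff.1 isOpen_interior x0 hx0
    have key : ∀ f ∈ B, ∀ x : X, ‖x‖ < ε → |RCLike.re ((f : X →L[𝕜] 𝕜) x)| ≤ 1 := by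
      intro f hf x hx
      rw [hB] at hf
      obtain ⟨hpos, hone⟩ := hf
      have h1 : x0 + x ∈ A := interior_subset (hball (by simp [dist_eq_norm, hx]))
      have h2 : x0 - x ∈ A := interior_subset (hball (by simp [dist_eq_norm, hx]))
      have e1 := hpos _ h1
      have e2 := hpos _ h2
      rw [map_add, map_add, hone] at e1
      rw [map_sub, map_sub, hone] at e2
      rw [abs_le]; constructor <;> linarith
    have key2 : ∀ f ∈ B, ∀ x : X, ‖x‖ < ε → ‖(f : X →L[𝕜] 𝕜) x‖ ≤ 2 := by
      intro f hf x hx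
      have h1 := key f hf x hx
      have h2 : ‖(RCLike.I : 𝕜) • x‖ < ε := by
        rw [norm_smul]
        have hI : ‖(RCLike.I : 𝕜)‖ ≤ 1 := by
          rcases eq_or_ne (RCLike.I : 𝕜) 0 with h | h
          · simp [h]
          · rw [RCLike.norm_I_of_ne_zero h]
        calc ‖(RCLike.I : 𝕜)‖ * ‖x‖ ≤ 1 * ‖x‖ := by gcongr
          _ < ε := by simpa using hx
      have h3 := key f hf _ h2
      rw [ContinuousLinearMap.map_smul, smul_eq_mul, RCLike.I_mul_re] at h3
      rw [abs_le] at h1 h3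
      have hsq : ‖f x‖ ^ 2 = RCLike.re (f x) * RCLike.re (f x)
          + RCLike.im (f x) * RCLike.im (f x) := RCLike.norm_sq_eq_def
      nlinarith [norm_nonneg (f x)]
    have hBsub : B ⊆ Metric.closedBall 0 (4 / ε) := by
      intro f hf
      rw [Metric.mem_closedBall, dist_zero_right]
      have hc : (1 : ℝ) < ‖(2 : 𝕜)‖ := by
        rw [RCLike.norm_ofNat]; norm_num
      refine ContinuousLinearMap.opNorm_le_of_shell hε (by positivity) hc ?_
      intro x hx1 hx2
      rw [RCLike.norm_ofNat] at hx1
      calc ‖f x‖ ≤ 2 := key2 f hf x hx2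
        _ = 4 / ε * (ε / 2) := by field_simp; norm_num
        _ ≤ 4 / ε * ‖x‖ := by gcongr
    exact (Metric.isBounded_closedBall).subset hBsub
  · -- Weak* closedness
    have himg : (StrongDual.toWeakDual '' B : Set (WeakDual 𝕜 X)) =
        {φ : WeakDual 𝕜 X | (∀ x ∈ A, 0 ≤ RCLike.re (φ x)) ∧ RCLike.re (φ x0) = 1} := by
      ext φ
      constructor
      · rintro ⟨f, hf, rfl⟩
        rw [hB] at hf
        exact hf
      · intro hφ
        exact ⟨StrongDual.toWeakDual.symm φ, by rw [hB]; exact hφ, by simp⟩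
    rw [himg]
    have h1 : IsClosed {φ : WeakDual 𝕜 X | ∀ x ∈ A, 0 ≤ RCLike.re (φ x)} := by
      have : {φ : WeakDual 𝕜 X | ∀ x ∈ A, 0 ≤ RCLike.re (φ x)} =
          ⋂ x ∈ A, {φ : WeakDual 𝕜 X | 0 ≤ RCLike.re (φ x)} := by
        ext φ; simp
      rw [this]
      refine isClosed_biInter fun x _ => ?_
      exact isClosed_le continuous_const
        (RCLike.continuous_re.comp (WeakDual.eval_continuous x))
    have h2 : IsClosed {φ : WeakDual 𝕜 X | RCLike.re (φ x0) = 1} :=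
      isClosed_eq (RCLike.continuous_re.comp (WeakDual.eval_continuous x0)) continuous_const
    exact h1.inter h2
end

section
/- Let X be a complex Banach space, T a bounded linear operator on X, A a nonempty closed convex bounded subset of X which does not contain the origin and has nonempty norm interior, x_0 a point of the norm interior of A, and B = {x^* ∈ X^* : Re x^*(x) ≥ 0 for all x ∈ A, and Re x^*(x_0) = 1}. Suppose (x_n)_{n∈ℕ} ⊆ A is a sequence and m ∈ ℕ is such that B ⊆ ⋃_{ℓ=1}^m ⋃_{k=1}^ℓ {x^* ∈ X^* : |x^*(T^k x_ℓ)| ≥ 1/m}. Then the linear span of {T^k x_ℓ : 1 ≤ ℓ ≤ m, 1 ≤ k ≤ ℓ} has nonempty intersection with the norm interior of A. -/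
/-- Let `X` be a complex Banach space, `T` a bounded operator on `X`, `A` a nonempty closed
convex bounded subset of `X` not containing the origin with nonempty norm interior, `x₀` a
point of the norm interior of `A`, and
`B = {x* ∈ X* : Re x*(x) ≥ 0 for all x ∈ A, and Re x*(x₀) = 1}`.  If `(x n) ⊆ A` and `m ∈ ℕ`
are such that `B ⊆ ⋃_{ℓ=1}^m ⋃_{k=1}^ℓ {x* : |x*(T^k x_ℓ)| ≥ 1/m}`, then the linear span of
`{T^k x_ℓ : 1 ≤ ℓ ≤ m, 1 ≤ k ≤ ℓ}` meets the norm interior of `A`. -/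
theorem statement6 {X : Type*} [NormedAddCommGroup X] [NormedSpace ℂ X] [CompleteSpace X]
    (T : X →L[ℂ] X)
    (A : Set X) (hne : A.Nonempty) (hclosed : IsClosed A) (hconv : Convex ℝ A)
    (hbdd : Bornology.IsBounded A) (h0 : (0 : X) ∉ A)
    (x0 : X) (hx0 : x0 ∈ interior A)
    (B : Set (X →L[ℂ] ℂ))
    (hB : B = {f : X →L[ℂ] ℂ | (∀ x ∈ A, 0 ≤ (f x).re) ∧ (f x0).re = 1})
    (x : ℕ → X) (hx : ∀ n, x n ∈ A) (m : ℕ) (hm : 1 ≤ m)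
    (hcover : B ⊆ ⋃ ℓ ∈ Finset.Icc 1 m, ⋃ k ∈ Finset.Icc 1 ℓ,
        {f : X →L[ℂ] ℂ | (m : ℝ)⁻¹ ≤ ‖f ((T ^ k) (x ℓ))‖}) :
    (((Submodule.span ℂ
        {y : X | ∃ k ℓ : ℕ, 1 ≤ k ∧ k ≤ ℓ ∧ ℓ ≤ m ∧ y = (T ^ k) (x ℓ)}) : Set X)
      ∩ interior A).Nonempty := by
  by_contra hcon
  rw [Set.not_nonempty_iff_eq_empty, ← Set.disjoint_iff_inter_eq_empty] at hcon
  set S : Set X := {y : X | ∃ k ℓ : ℕ, 1 ≤ k ∧ k ≤ ℓ ∧ ℓ ≤ m ∧ y = (T ^ k) (x ℓ)}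
  set Y : Submodule ℂ X := Submodule.span ℂ S
  -- separate interior A from Y
  obtain ⟨f, u, hfu, hfY⟩ := geometric_hahn_banach_open (hconv.interior) isOpen_interior
    ((Y.restrictScalars ℝ).convex) hcon.symm
  -- f vanishes on Y
  have hfY0 : ∀ b ∈ Y, f b = 0 := by
    intro b hb
    by_contra hfb
    have h1 : u ≤ f (((u - 1) / f b : ℝ) • b) :=
      hfY _ (Submodule.smul_of_tower_mem _ _ hb)
    rw [map_smul, smul_eq_mul, div_mul_cancel₀ _ hfb] at h1
    linarith
  have hu0 : u ≤ 0 := by simpa using hfY0 0 (zero_mem Y) ▸ hfY 0 (zero_mem Y)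
  -- f < 0 on interior A
  have hneg : ∀ a ∈ interior A, f a < 0 := fun a ha => lt_of_lt_of_le (hfu a ha) hu0
  -- f ≤ 0 on A
  have hA0 : ∀ a ∈ A, f a ≤ 0 := by
    intro a ha
    by_contra hpos
    push_neg at hpos
    have hfx0' : f x0 < 0 := hneg x0 hx0
    set d : ℝ := f a - f x0 with hd
    have hdpos : 0 < d := by linarith
    set b : ℝ := f a / (2 * d) with hbdef
    have hb0 : 0 < b := by positivity
    have hb1 : b < 1 := by
      rw [hbdef, div_lt_one (by linarith)]; linarith
    have hbd : b * d = f a / 2 := by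
      rw [hbdef]; field_simp
    have hmem : (1 - b) • a + b • x0 ∈ interior A :=
      hconv.combo_closure_interior_mem_interior (subset_closure ha) hx0
        (by linarith) hb0 (by ring)
    have hlt := hneg _ hmem
    rw [map_add, map_smul, map_smul] at hlt
    simp only [smul_eq_mul] at hlt
    nlinarith [hbd]
  have hfx0 : f x0 < 0 := hneg x0 hx0
  -- complexify: g := extension of -(f x0)⁻¹ • (-f)
  set c : ℝ := (-(f x0))⁻¹ with hc
  have hcpos : 0 < c := inv_pos.2 (by linarith)
  set fr : X →L[ℝ] ℝ := c • (-f) with hfr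
  set g : X →L[ℂ] ℂ := fr.extendTo𝕜' with hg
  have hgre : ∀ z : X, (g z).re = fr z := fun z =>
    fr.toLinearMap.extendTo𝕜'_apply_re (𝕜 := ℂ) z
  have hgY : ∀ b ∈ Y, g b = 0 := by
    intro b hb
    have h1 : fr b = 0 := by
      simp [hfr, hfY0 b hb]
    have h2 : fr ((RCLike.I : ℂ) • b) = 0 := by
      simp [hfr, hfY0 _ (Y.smul_mem _ hb)]
    rw [hg, show fr.extendTo𝕜' b = ((fr b : ℂ) - (RCLike.I : ℂ) * (fr ((RCLike.I : ℂ) • b) : ℂ)) from rfl, h1, h2]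
    simp
  have hgB : g ∈ B := by
    rw [hB]
    constructor
    · intro z hz
      rw [hgre]
      simp only [hfr, ContinuousLinearMap.coe_smul', Pi.smul_apply,
        ContinuousLinearMap.neg_apply, smul_eq_mul]
      have := hA0 z hz
      nlinarith
    · rw [hgre]
      simp only [hfr, ContinuousLinearMap.coe_smul', Pi.smul_apply,
        ContinuousLinearMap.neg_apply, smul_eq_mul]
      rw [hc]
      field_simp
      exact div_self hfx0.ne
  obtain ⟨s₁, hs₁⟩ := Set.mem_iUnion.1 (hcover hgB)
  obtain ⟨hs₁m, hs₂⟩ := Set.mem_iUnion.1 hs₁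
  obtain ⟨s₂, hs₂'⟩ := Set.mem_iUnion.1 hs₂
  obtain ⟨hs₂k, hmem⟩ := Set.mem_iUnion.1 hs₂'
  simp only [Finset.mem_Icc] at hs₁m hs₂k
  have hYmem : (T ^ s₂) (x s₁) ∈ Y :=
    Submodule.subset_span ⟨s₂, s₁, hs₂k.1, hs₂k.2, hs₁m.2, rfl⟩
  have h0' : g ((T ^ s₂) (x s₁)) = 0 := hgY _ hYmem
  have : (m : ℝ)⁻¹ ≤ 0 := by
    have := hmem
    rw [Set.mem_setOf_eq, h0', norm_zero] at this
    exact this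
  have : (0 : ℝ) < (m : ℝ)⁻¹ := by positivity
  linarith
end

section
/- Every compact bounded linear operator on a complex reflexive Banach space of dimension greater than 1 has a non-trivial closed invariant subspace. That is, if X is a complex reflexive Banach space with dim X > 1 and T : X → X is a compact bounded linear operator, then there exists a closed linear subspace Y of X with {0} ⊊ Y ⊊ X and T(Y) ⊆ Y. -/
open Polynomial Metric Set Filter Topology
open scoped ENNReal NNReal

/-- If `T` has an eigenvector, the span of it is a nontrivial closed invariant subspace
(nontrivial since the rank is `> 1`). -/
lemma aux_eigvec_subspace {X : Type*} [NormedAddCommGroup X] [NormedSpace ℂ X] [CompleteSpace X]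
    (hdim : 1 < Module.rank ℂ X) (T : X →L[ℂ] X) {v : X} {μ : ℂ} (hv : v ≠ 0)
    (hTv : T v = μ • v) :
    ∃ Y : Submodule ℂ X, IsClosed (Y : Set X) ∧ Y ≠ ⊥ ∧ Y ≠ ⊤ ∧ ∀ y ∈ Y, T y ∈ Y := by
  refine ⟨ℂ ∙ v, (ℂ ∙ v).closed_of_finiteDimensional, ?_, ?_, ?_⟩
  · simpa [Submodule.span_singleton_eq_bot] using hv
  · intro h
    have h1 : Module.rank ℂ X ≤ 1 := by
      have := rank_span_le (R := ℂ) ({v} : Set X)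
      rw [h] at this
      simpa [rank_top] using this
    exact absurd hdim (not_lt.2 h1)
  · intro y hy
    obtain ⟨c, rfl⟩ := Submodule.mem_span_singleton.1 hy
    rw [map_smul, hTv, smul_smul]
    exact Submodule.smul_mem _ _ (Submodule.mem_span_singleton_self v)

/-- Quantitative lower bound for the resolvent near a spectral point. -/
lemma aux_resolvent_lb {A : Type*} [NormedRing A] [NormedAlgebra ℂ A] [NormOneClass A]
    [CompleteSpace A] {a : A} {μ lam : ℂ} (hμ : μ ∈ spectrum ℂ a) (u : Aˣ)
    (hu : (u : A) = algebraMap ℂ A lam - a) :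
    1 ≤ ‖(↑u⁻¹ : A)‖ * ‖lam - μ‖ := by
  by_contra h
  push_neg at h
  have h1 : ‖(↑u⁻¹ : A) * algebraMap ℂ A (lam - μ)‖ < 1 :=
    lt_of_le_of_lt (norm_mul_le _ _) (by rwa [norm_algebraMap'])
  have key : algebraMap ℂ A μ - a = (u : A) * (1 - (↑u⁻¹ : A) * algebraMap ℂ A (lam - μ)) := by
    rw [mul_sub, mul_one, ← mul_assoc, u.mul_inv, one_mul, hu, map_sub]
    abel
  have hunit : IsUnit (algebraMap ℂ A μ - a) := by
    rw [key]
    exact u.isUnit.mul (Units.oneSub _ h1).isUnit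
  exact (spectrum.mem_iff.1 hμ) hunit

/-- A compact operator with positive spectral radius has an eigenvector. -/
lemma aux_eigvec_of_pos_radius {X : Type*} [NormedAddCommGroup X] [NormedSpace ℂ X]
    [CompleteSpace X] [Nontrivial X] (T : X →L[ℂ] X) (hT : IsCompactOperator ⇑T)
    (hr : 0 < spectralRadius ℂ T) :
    ∃ (v : X) (μ : ℂ), v ≠ 0 ∧ T v = μ • v := by
  obtain ⟨μ, hμ, hμr⟩ := spectrum.exists_nnnorm_eq_spectralRadius T
  have hμ0 : μ ≠ 0 := by
    rintro rfl
    rw [← hμr] at hr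
    simp at hr
  have hμn : (0:ℝ) < ‖μ‖ := norm_pos_iff.2 hμ0
  -- the approximating scalars
  set lam : ℕ → ℂ := fun n => ((1 + ((n:ℝ)+1)⁻¹ : ℝ) : ℂ) * μ with hlam
  have hfac : ∀ n : ℕ, (1:ℝ) < 1 + ((n:ℝ)+1)⁻¹ := by
    intro n
    have : (0:ℝ) < ((n:ℝ)+1)⁻¹ := by positivity
    linarith
  have hlam_norm : ∀ n : ℕ, ‖lam n‖ = (1 + ((n:ℝ)+1)⁻¹) * ‖μ‖ := by
    intro n
    rw [hlam]
    simp only [norm_mul, Complex.norm_real, Real.norm_eq_abs]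
    rw [abs_of_pos (by linarith [hfac n])]
  have hlam_sub : ∀ n : ℕ, lam n - μ = (((n:ℝ)+1)⁻¹ : ℝ) * μ := by
    intro n
    rw [hlam]
    push_cast
    ring
  have hlam_sub_norm : ∀ n : ℕ, ‖lam n - μ‖ = ((n:ℝ)+1)⁻¹ * ‖μ‖ := by
    intro n
    rw [hlam_sub n]
    simp only [norm_mul, Complex.norm_real, Real.norm_eq_abs]
    rw [abs_of_pos (by positivity)]
  have hlam_res : ∀ n : ℕ, IsUnit (algebraMap ℂ (X →L[ℂ] X) (lam n) - T) := by
    intro n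
    have hlt : ‖μ‖ < ‖lam n‖ := by
      rw [hlam_norm n]
      nlinarith [hfac n]
    have := spectrum.mem_resolventSet_of_spectralRadius_lt (a := T) (k := lam n) (by
      rw [← hμr]
      exact_mod_cast hlt)
    rwa [spectrum.mem_resolventSet_iff] at this
  set u : ℕ → (X →L[ℂ] X)ˣ := fun n => (hlam_res n).unit with hu
  set R : ℕ → (X →L[ℂ] X) := fun n => ↑(u n)⁻¹ with hR
  have hRlb : ∀ n : ℕ, ((n:ℝ)+1) / ‖μ‖ ≤ ‖R n‖ := by
    intro n
    have h1 : 1 ≤ ‖R n‖ * ‖lam n - μ‖ :=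
      aux_resolvent_lb hμ (u n) ((hlam_res n).unit_spec)
    rw [hlam_sub_norm n] at h1
    rw [div_le_iff₀ hμn]
    calc ((n:ℝ)+1) = ((n:ℝ)+1) * 1 := by ring
    _ ≤ ((n:ℝ)+1) * (‖R n‖ * (((n:ℝ)+1)⁻¹ * ‖μ‖)) := by
        apply mul_le_mul_of_nonneg_left h1 (by positivity)
    _ = ‖R n‖ * ‖μ‖ := by
        field_simp
  have hRpos : ∀ n : ℕ, 0 < ‖R n‖ := by
    intro n
    refine lt_of_lt_of_le ?_ (hRlb n)
    exact div_pos (by positivity) hμn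
  have hvec : ∀ n : ℕ, ∃ x : X, ‖x‖ < 1 ∧ ‖R n‖ / 2 < ‖R n x‖ :=
    fun n => (R n).exists_lt_apply_of_lt_opNorm (by linarith [hRpos n])
  choose x hx1 hx2 using hvec
  set w : ℕ → X := fun n => R n (x n) with hw
  have hwpos : ∀ n : ℕ, 0 < ‖w n‖ := fun n => lt_trans (half_pos (hRpos n)) (hx2 n)
  have hwne : ∀ n : ℕ, w n ≠ 0 := fun n => norm_pos_iff.1 (hwpos n)
  set z : ℕ → X := fun n => ‖w n‖⁻¹ • w n with hz
  have hznorm : ∀ n : ℕ, ‖z n‖ = 1 := by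
    intro n
    rw [hz]
    simp only [norm_smul, norm_inv, norm_norm]
    exact inv_mul_cancel₀ (hwpos n).ne'
  -- key identity
  have hkey : ∀ n : ℕ, lam n • w n - T (w n) = x n := by
    intro n
    have h1 : (algebraMap ℂ (X →L[ℂ] X) (lam n) - T) (R n (x n)) = x n := by
      have h2 : (algebraMap ℂ (X →L[ℂ] X) (lam n) - T) * R n = 1 := by
        rw [hR, ← (hlam_res n).unit_spec]
        exact (u n).mul_inv
      calc (algebraMap ℂ (X →L[ℂ] X) (lam n) - T) (R n (x n))
          = ((algebraMap ℂ (X →L[ℂ] X) (lam n) - T) * R n) (x n) := rfl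
      _ = x n := by rw [h2]; rfl
    rw [← h1]
    simp [Algebra.algebraMap_eq_smul_one]
    rfl
  have hbound : ∀ n : ℕ, ‖μ • z n - T (z n)‖ ≤ 3 * ‖μ‖ / ((n:ℝ)+1) := by
    intro n
    have e1 : ‖lam n • z n - T (z n)‖ ≤ 2 * ‖μ‖ / ((n:ℝ)+1) := by
      have : lam n • z n - T (z n) = ‖w n‖⁻¹ • (lam n • w n - T (w n)) := by
        rw [hz]
        simp only [ContinuousLinearMap.map_smul_of_tower, smul_sub, smul_comm (‖w n‖⁻¹) (lam n)]
      rw [this, hkey n, norm_smul, norm_inv, norm_norm]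
      have h3 : ‖w n‖⁻¹ ≤ 2 / ‖R n‖ := by
        have h4 := inv_anti₀ (half_pos (hRpos n)) (le_of_lt (hx2 n))
        rwa [inv_div] at h4
      calc ‖w n‖⁻¹ * ‖x n‖ ≤ (2/‖R n‖) * 1 :=
            mul_le_mul h3 (le_of_lt (hx1 n)) (norm_nonneg _) (by positivity)
      _ = 2/‖R n‖ := by ring
      _ ≤ 2 * ‖μ‖ / ((n:ℝ)+1) := by
          rw [div_le_div_iff₀ (hRpos n) (by positivity)]
          have := hRlb n
          rw [div_le_iff₀ hμn] at this
          nlinarith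
    have e2 : ‖(μ - lam n) • z n‖ ≤ ‖μ‖ / ((n:ℝ)+1) := by
      rw [norm_smul, hznorm n, mul_one, ← norm_neg, neg_sub, hlam_sub_norm n]
      rw [div_eq_inv_mul]
    calc ‖μ • z n - T (z n)‖ = ‖(μ - lam n) • z n + (lam n • z n - T (z n))‖ := by
          congr 1
          rw [sub_smul]
          abel
    _ ≤ ‖(μ - lam n) • z n‖ + ‖lam n • z n - T (z n)‖ := norm_add_le _ _
    _ ≤ ‖μ‖ / ((n:ℝ)+1) + 2 * ‖μ‖ / ((n:ℝ)+1) := add_le_add e2 e1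
    _ = 3 * ‖μ‖ / ((n:ℝ)+1) := by ring
  have htend0 : Tendsto (fun n : ℕ => μ • z n - T (z n)) atTop (𝓝 0) := by
    apply squeeze_zero_norm hbound
    have : Tendsto (fun n : ℕ => ((n:ℝ)+1)) atTop atTop := by
      apply tendsto_atTop_add_const_right
      exact tendsto_natCast_atTop_atTop
    simpa [div_eq_mul_inv] using (this.inv_tendsto_atTop).const_mul (3 * ‖μ‖)
  -- compactness
  obtain ⟨K, hK, hKsub⟩ :=
    IsCompactOperator.image_closedBall_subset_compact (f := (T : X →ₗ[ℂ] X)) hT 1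
  have hmem : ∀ n : ℕ, T (z n) ∈ K := by
    intro n
    apply hKsub
    exact ⟨z n, by simp [hznorm n], rfl⟩
  obtain ⟨y, hy, φ, hφ, hconv⟩ := hK.tendsto_subseq hmem
  have hμz : Tendsto (fun n : ℕ => μ • z (φ n)) atTop (𝓝 y) := by
    have h1 : Tendsto (fun n : ℕ => μ • z (φ n) - T (z (φ n))) atTop (𝓝 0) :=
      htend0.comp hφ.tendsto_atTop
    have := h1.add hconv
    simpa using this
  have hzconv : Tendsto (fun n : ℕ => z (φ n)) atTop (𝓝 (μ⁻¹ • y)) := by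
    have := hμz.const_smul μ⁻¹
    simpa [smul_smul, inv_mul_cancel₀ hμ0] using this
  refine ⟨μ⁻¹ • y, μ, ?_, ?_⟩
  · have hnorm1 : Tendsto (fun n : ℕ => ‖z (φ n)‖) atTop (𝓝 ‖μ⁻¹ • y‖) :=
      hzconv.norm
    have h1 : ‖μ⁻¹ • y‖ = 1 := by
      apply tendsto_nhds_unique hnorm1
      simpa [hznorm] using tendsto_const_nhds (α := ℝ) (x := (1:ℝ))
    intro h
    rw [h] at h1
    simp at h1
  · have hTconv : Tendsto (fun n : ℕ => T (z (φ n))) atTop (𝓝 (T (μ⁻¹ • y))) :=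
      (T.continuous.tendsto _).comp hzconv
    have h1 : T (μ⁻¹ • y) = y := tendsto_nhds_unique hTconv hconv
    rw [h1, smul_smul, mul_inv_cancel₀ hμ0, one_smul]

/-- Evaluation of polynomials in `T` at a fixed vector `y`, as a linear map. -/
noncomputable def evalOrbit {X : Type*} [NormedAddCommGroup X] [NormedSpace ℂ X]
    (T : X →L[ℂ] X) (y : X) : Polynomial ℂ →ₗ[ℂ] X where
  toFun p := Polynomial.aeval T p y
  map_add' p q := by simp
  map_smul' c p := by simp

/-- Every compact bounded linear operator on a complex reflexive Banach space of dimension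
greater than 1 has a non-trivial closed invariant subspace. -/
theorem statement8 {X : Type*} [NormedAddCommGroup X] [NormedSpace ℂ X] [CompleteSpace X]
    (hrefl : Function.Surjective ⇑(NormedSpace.inclusionInDoubleDual ℂ X))
    (hdim : 1 < Module.rank ℂ X)
    (T : X →L[ℂ] X) (hT : IsCompactOperator ⇑T) :
    ∃ Y : Submodule ℂ X, IsClosed (Y : Set X) ∧ Y ≠ ⊥ ∧ Y ≠ ⊤ ∧ ∀ y ∈ Y, T y ∈ Y := by
  haveI : Nontrivial X := rank_pos_iff_nontrivial.1 (lt_trans zero_lt_one hdim)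
  by_cases hE : ∃ (v : X) (μ : ℂ), v ≠ 0 ∧ T v = μ • v
  · obtain ⟨v, μ, hv, hTv⟩ := hE
    exact aux_eigvec_subspace hdim T hv hTv
  push_neg at hE
  by_contra hcon
  -- `T` is injective
  have hinj : ∀ v : X, T v = 0 → v = 0 := by
    intro v hv
    by_contra h
    exact hE v 0 h (by simp [hv])
  -- density of polynomial orbits
  have hdense : ∀ y : X, y ≠ 0 → ∀ x : X,
      x ∈ closure ((LinearMap.range (evalOrbit T y) : Submodule ℂ X) : Set X) := by
    intro y hy x
    set W := LinearMap.range (evalOrbit T y) with hW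
    set Z := W.topologicalClosure with hZdef
    have hyW : y ∈ W := ⟨1, by simp [evalOrbit]⟩
    have hWinv : ∀ v ∈ W, T v ∈ W := by
      rintro v ⟨p, rfl⟩
      refine ⟨Polynomial.X * p, ?_⟩
      show Polynomial.aeval T (Polynomial.X * p) y = T (Polynomial.aeval T p y)
      rw [map_mul, Polynomial.aeval_X]
      rfl
    have hZinv : ∀ v ∈ Z, T v ∈ Z := by
      intro v hv
      have h1 : T v ∈ closure (⇑T '' (W : Set X)) := by
        apply image_closure_subset_closure_image T.continuous
        exact ⟨v, hv, rfl⟩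
      have h2 : ⇑T '' (W : Set X) ⊆ (W : Set X) := by
        rintro _ ⟨a, ha, rfl⟩
        exact hWinv a ha
      exact closure_mono h2 h1
    have hZne : Z ≠ ⊥ := by
      intro h
      apply hy
      have h1 : y ∈ Z := W.le_topologicalClosure hyW
      rwa [h, Submodule.mem_bot] at h1
    have hZtop : Z = ⊤ := by
      by_contra h
      exact hcon ⟨Z, W.isClosed_topologicalClosure, hZne, h, hZinv⟩
    have h3 : x ∈ Z := by rw [hZtop]; trivial
    rwa [← Submodule.topologicalClosure_coe]
  -- setting up the ball
  obtain ⟨w, hw⟩ := exists_ne (0 : X)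
  have hTw : T w ≠ 0 := fun h => hw (hinj w h)
  have hwpos : 0 < ‖w‖ := norm_pos_iff.2 hw
  have hTwpos : 0 < ‖T w‖ := norm_pos_iff.2 hTw
  set t : ℝ := max (2 / ‖w‖) ((‖T‖ + 1) / ‖T w‖) with ht
  have htpos : 0 < t := lt_of_lt_of_le (by positivity) (le_max_left _ _)
  set x₀ : X := (t : ℂ) • w with hx₀
  have hx₀norm : ‖x₀‖ = t * ‖w‖ := by
    rw [hx₀, norm_smul, Complex.norm_real, Real.norm_eq_abs, abs_of_pos htpos]
  have hx₀2 : 2 ≤ ‖x₀‖ := by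
    rw [hx₀norm]
    calc (2:ℝ) = (2/‖w‖) * ‖w‖ := by field_simp
    _ ≤ t * ‖w‖ := mul_le_mul_of_nonneg_right (le_max_left _ _) (norm_nonneg _)
  have hTx₀ : ‖T‖ + 1 ≤ ‖T x₀‖ := by
    have h1 : T x₀ = (t:ℂ) • T w := by rw [hx₀, map_smul]
    rw [h1, norm_smul, Complex.norm_real, Real.norm_eq_abs, abs_of_pos htpos]
    calc ‖T‖ + 1 = ((‖T‖+1)/‖T w‖) * ‖T w‖ := by field_simp
    _ ≤ t * ‖T w‖ := mul_le_mul_of_nonneg_right (le_max_right _ _) (norm_nonneg _)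
  have hball : ∀ v ∈ closedBall x₀ 1, 1 ≤ ‖T v‖ := by
    intro v hv
    have hdist : ‖x₀ - v‖ ≤ 1 := by
      rw [mem_closedBall, dist_eq_norm] at hv
      rw [norm_sub_rev]
      exact hv
    have h1 : ‖T x₀ - T v‖ ≤ ‖T‖ := by
      rw [← map_sub]
      calc ‖T (x₀ - v)‖ ≤ ‖T‖ * ‖x₀ - v‖ := T.le_opNorm _
      _ ≤ ‖T‖ * 1 := mul_le_mul_of_nonneg_left hdist (norm_nonneg T)
      _ = ‖T‖ := mul_one _
    have h2 : ‖T x₀‖ - ‖T v‖ ≤ ‖T x₀ - T v‖ := norm_sub_norm_le _ _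
    linarith
  set C := closure (⇑T '' closedBall x₀ 1) with hC
  have hCcomp : IsCompact C :=
    IsCompactOperator.isCompact_closure_image_of_bounded (f := (T : X →ₗ[ℂ] X)) hT
      isBounded_closedBall
  have hCnorm : ∀ v ∈ C, 1 ≤ ‖v‖ := by
    intro v hv
    have h1 : (⇑T '' closedBall x₀ 1) ⊆ {u : X | 1 ≤ ‖u‖} := by
      rintro _ ⟨a, ha, rfl⟩
      exact hball a ha
    have h2 : IsClosed {u : X | 1 ≤ ‖u‖} := isClosed_le continuous_const continuous_norm
    exact closure_minimal h1 h2 hv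
  -- open cover by polynomials
  set U : Polynomial ℂ → Set X :=
    fun p => (⇑(Polynomial.aeval T p : X →L[ℂ] X)) ⁻¹' Metric.ball x₀ 1 with hU
  have hUopen : ∀ p, IsOpen (U p) :=
    fun p => (Polynomial.aeval T p : X →L[ℂ] X).continuous.isOpen_preimage _ isOpen_ball
  have hCsub : C ⊆ ⋃ p : Polynomial ℂ, U p := by
    intro v hv
    have hvne : v ≠ 0 := by
      intro h
      have := hCnorm v hv
      rw [h] at this
      norm_num at this
    have h1 := hdense v hvne x₀
    rw [Metric.mem_closure_iff] at h1
    obtain ⟨z, hz, hdist⟩ := h1 1 one_pos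
    obtain ⟨p, rfl⟩ := hz
    refine Set.mem_iUnion.2 ⟨p, ?_⟩
    rw [hU]
    show Polynomial.aeval T p v ∈ Metric.ball x₀ 1
    rw [Metric.mem_ball, dist_comm]
    exact hdist
  obtain ⟨s, hs⟩ := hCcomp.elim_finite_subcover U hUopen hCsub
  set c : ℝ := 1 + ∑ p ∈ s, ‖(Polynomial.aeval T p : X →L[ℂ] X)‖ with hc
  have hc1 : 1 ≤ c := by
    rw [hc]
    have : (0:ℝ) ≤ ∑ p ∈ s, ‖(Polynomial.aeval T p : X →L[ℂ] X)‖ :=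
      Finset.sum_nonneg fun p _ => norm_nonneg _
    linarith
  have hcpos : (0:ℝ) < c := lt_of_lt_of_le one_pos hc1
  have hcmem : ∀ p ∈ s, ‖(Polynomial.aeval T p : X →L[ℂ] X)‖ ≤ c := by
    intro p hp
    rw [hc]
    have := Finset.single_le_sum
      (f := fun q => ‖(Polynomial.aeval T q : X →L[ℂ] X)‖) (fun i _ => norm_nonneg _) hp
    linarith
  -- the Hilden iteration
  have hiter : ∀ k : ℕ, ∃ q : Polynomial ℂ, ‖(Polynomial.aeval T q : X →L[ℂ] X)‖ ≤ c ^ k ∧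
      ‖(Polynomial.aeval T (q * Polynomial.X ^ k)) x₀ - x₀‖ ≤ 1 := by
    intro k
    induction k with
    | zero => exact ⟨1, by simp, by simp⟩
    | succ k ih =>
      obtain ⟨q, hq1, hq2⟩ := ih
      set v := (Polynomial.aeval T (q * Polynomial.X ^ k)) x₀ with hv
      have hvB : v ∈ closedBall x₀ 1 := by
        rw [mem_closedBall, dist_eq_norm]
        exact hq2
      have hTvC : T v ∈ C := subset_closure ⟨v, hvB, rfl⟩
      have h1 := hs hTvC
      simp only [Set.mem_iUnion] at h1
      obtain ⟨p, hps, hp⟩ := h1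
      refine ⟨p * q, ?_, ?_⟩
      · rw [map_mul]
        calc ‖(Polynomial.aeval T p : X →L[ℂ] X) * Polynomial.aeval T q‖
            ≤ ‖(Polynomial.aeval T p : X →L[ℂ] X)‖ * ‖(Polynomial.aeval T q : X →L[ℂ] X)‖ :=
              norm_mul_le _ _
        _ ≤ c * c^k := mul_le_mul (hcmem p hps) hq1 (norm_nonneg _) (le_of_lt hcpos)
        _ = c^(k+1) := by ring
      · have heq : (Polynomial.aeval T (p * q * Polynomial.X ^ (k+1))) x₀ =
            (Polynomial.aeval T p) (T v) := by
          have h2 : p * q * Polynomial.X ^ (k+1) =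
              p * (Polynomial.X * (q * Polynomial.X ^ k)) := by ring
          rw [h2, map_mul, map_mul, Polynomial.aeval_X]
          rfl
        rw [heq]
        have h3 : Polynomial.aeval T p (T v) ∈ Metric.ball x₀ 1 := hp
        rw [Metric.mem_ball, dist_eq_norm] at h3
        exact le_of_lt h3
  -- lower bound on the norms of powers
  have hTk : ∀ k : ℕ, 1 ≤ c^k * (‖T^k‖ * ‖x₀‖) := by
    intro k
    obtain ⟨q, hq1, hq2⟩ := hiter k
    have h1 : ‖x₀‖ - 1 ≤ ‖(Polynomial.aeval T (q * Polynomial.X^k)) x₀‖ := by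
      have h2 : ‖x₀‖ - ‖(Polynomial.aeval T (q * Polynomial.X^k)) x₀‖ ≤
          ‖x₀ - (Polynomial.aeval T (q * Polynomial.X^k)) x₀‖ := norm_sub_norm_le _ _
      rw [norm_sub_rev] at h2
      linarith
    have h2 : ‖(Polynomial.aeval T (q * Polynomial.X^k)) x₀‖ ≤ c^k * (‖T^k‖ * ‖x₀‖) := by
      rw [map_mul, Polynomial.aeval_X_pow]
      calc ‖((Polynomial.aeval T q : X →L[ℂ] X) * T^k) x₀‖
          = ‖(Polynomial.aeval T q) ((T^k) x₀)‖ := rfl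
      _ ≤ ‖(Polynomial.aeval T q : X →L[ℂ] X)‖ * ‖(T^k) x₀‖ :=
            (Polynomial.aeval T q : X →L[ℂ] X).le_opNorm _
      _ ≤ c^k * (‖T^k‖ * ‖x₀‖) :=
            mul_le_mul hq1 ((T^k).le_opNorm x₀) (norm_nonneg _) (pow_nonneg (le_of_lt hcpos) k)
    linarith
  -- positive spectral radius
  set b : NNReal := ⟨1/(2*c), by positivity⟩ with hb
  have hbR : (b : ℝ) = 1/(2*c) := rfl
  have hbpos : (0:ℝ) < b := by rw [hbR]; positivity
  obtain ⟨N, hN⟩ : ∃ N : ℕ, ‖x₀‖ ≤ 2^N := by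
    obtain ⟨N, hN⟩ := pow_unbounded_of_one_lt (y := (2:ℝ)) ‖x₀‖ one_lt_two
    exact ⟨N, le_of_lt hN⟩
  have hterm : ∀ n : ℕ, n ≥ N+1 → (b : ℝ≥0∞) ≤ (‖T^n‖₊ : ℝ≥0∞) ^ (1/(n:ℝ)) := by
    intro n hn
    have hn0 : n ≠ 0 := by omega
    have h1 : (1/(2*c))^n ≤ ‖T^n‖ := by
      have h2 : ‖x₀‖ ≤ 2^n := le_trans hN (pow_le_pow_right₀ one_le_two (by omega))
      have h3 := hTk n
      have h4 : (0:ℝ) < c^n := pow_pos hcpos n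
      have h5 : (0:ℝ) < (2:ℝ)^n := by positivity
      rw [div_pow, one_pow, mul_pow, div_le_iff₀ (by positivity)]
      nlinarith [norm_nonneg (T^n), mul_le_mul_of_nonneg_left h2
        (mul_nonneg (le_of_lt h4) (norm_nonneg (T^n)))]
    have h3 : (b:NNReal)^n ≤ ‖T^n‖₊ := by
      have : ((b:NNReal)^n : ℝ) ≤ (‖T^n‖₊ : ℝ) := by
        push_cast
        rw [hbR]
        exact h1
      exact_mod_cast this
    calc (b : ℝ≥0∞) = (((b:NNReal)^n : NNReal) : ℝ≥0∞) ^ (1/(n:ℝ)) := by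
          rw [ENNReal.coe_pow, ← ENNReal.rpow_natCast ((b:NNReal):ℝ≥0∞) n, ← ENNReal.rpow_mul,
            mul_one_div, div_self (by exact_mod_cast hn0 : (n:ℝ) ≠ 0), ENNReal.rpow_one]
    _ ≤ (‖T^n‖₊ : ℝ≥0∞) ^ (1/(n:ℝ)) :=
          ENNReal.rpow_le_rpow (by exact_mod_cast h3) (by positivity)
  have hrad : (b : ℝ≥0∞) ≤ spectralRadius ℂ T := by
    apply ge_of_tendsto (spectrum.pow_nnnorm_pow_one_div_tendsto_nhds_spectralRadius T)
    filter_upwards [eventually_ge_atTop (N+1)] with n hn using hterm n hn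
  have hradpos : 0 < spectralRadius ℂ T := by
    refine lt_of_lt_of_le ?_ hrad
    exact_mod_cast (by exact_mod_cast hbpos : (0:NNReal) < b)
  obtain ⟨v, μ, hv, hTv⟩ := aux_eigvec_of_pos_radius T hT hradpos
  exact hE v μ hv hTv
end

section
/- Let X be a reflexive Banach space of dimension greater than 1, T a bounded linear operator on X, and A any closed ball of X (A = {x ∈ X : ‖x − c‖ ≤ r} for some c ∈ X and r > 0). Then at least one of the following holds: (i) there exists v ∈ A such that Tv = 0; (ii) there exists v ∈ A such that the closed linear span of Orb_T(Tv) is a non-trivial closed invariant subspace of T; (iii) for every sequence (x_n)_{n∈ℕ} ∈ A^ℕ, A is contained in the closed linear span of {T^k x_ℓ : ℓ ∈ ℕ, 1 ≤ k ≤ ℓ}. -/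
open NormedSpace Metric

private lemma aux_sep' {𝕜 X : Type*} [RCLike 𝕜] [NormedAddCommGroup X] [NormedSpace 𝕜 X]
    (M : Submodule 𝕜 X) (hM : IsClosed (M : Set X)) (a : X) (ha : a ∉ M) :
    ∃ f : X →L[𝕜] 𝕜, (∀ m ∈ M, f m = 0) ∧ f a ≠ 0 := by
  haveI : IsClosed (M : Set X) := hM
  let π : X →L[𝕜] X ⧸ M :=
    LinearMap.mkContinuous M.mkQ 1 (fun x => by
      simpa using Submodule.Quotient.norm_mk_le M x)
  have hπa : π a ≠ 0 := by
    simpa [π, LinearMap.mkContinuous_apply, Submodule.Quotient.mk_eq_zero] using ha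
  obtain ⟨g, hg1, hg2⟩ := exists_dual_vector 𝕜 (π a) (norm_ne_zero_iff.2 hπa)
  refine ⟨g.comp π, fun m hm => ?_, ?_⟩
  · have : π m = 0 := by
      simpa [π, LinearMap.mkContinuous_apply, Submodule.Quotient.mk_eq_zero] using hm
    simp [this]
  · simp only [ContinuousLinearMap.comp_apply, hg2]
    simpa using norm_ne_zero_iff.2 hπa

private lemma aux_cpt' {𝕜 X : Type*} [RCLike 𝕜] [NormedAddCommGroup X] [NormedSpace 𝕜 X]
    (hrefl : Function.Surjective ⇑(inclusionInDoubleDual 𝕜 X)) (c : X) (r : ℝ) :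
    IsCompact (⇑(toWeakSpace 𝕜 X) '' Metric.closedBall c r) := by
  have hsurj : Function.Surjective ⇑(inclusionInDoubleDualLi 𝕜 (E := X)) := hrefl
  let e : X ≃ₗᵢ[𝕜] StrongDual 𝕜 (StrongDual 𝕜 X) :=
    LinearIsometryEquiv.ofSurjective (inclusionInDoubleDualLi 𝕜 (E := X)) hsurj
  let g : WeakDual 𝕜 (StrongDual 𝕜 X) → WeakSpace 𝕜 X :=
    fun y => toWeakSpace 𝕜 X (e.symm (WeakDual.toStrongDual y))
  have hg : Continuous g := by
    apply WeakBilin.continuous_of_continuous_eval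
    intro f
    have key : (fun y : WeakDual 𝕜 (StrongDual 𝕜 X) =>
        (topDualPairing 𝕜 X).flip (g y) f) =
        fun y : WeakDual 𝕜 (StrongDual 𝕜 X) => (topDualPairing 𝕜 (StrongDual 𝕜 X)) y f := by
      funext y
      show f (e.symm (WeakDual.toStrongDual y)) = WeakDual.toStrongDual y f
      have h1 : e (e.symm (WeakDual.toStrongDual y)) = WeakDual.toStrongDual y :=
        e.apply_symm_apply _
      calc f (e.symm (WeakDual.toStrongDual y))
          = e (e.symm (WeakDual.toStrongDual y)) f := rfl
        _ = WeakDual.toStrongDual y f := by rw [h1]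
    rw [key]
    exact WeakBilin.eval_continuous _ f
  have h1 : IsCompact (WeakDual.toStrongDual ⁻¹' closedBall (e c) r) :=
    WeakDual.isCompact_closedBall (e c) r
  have h2 : ⇑(toWeakSpace 𝕜 X) '' closedBall c r
      = g '' (WeakDual.toStrongDual ⁻¹' closedBall (e c) r) := by
    ext z
    constructor
    · rintro ⟨v, hv, rfl⟩
      refine ⟨WeakDual.toStrongDual.symm (e v), ?_, ?_⟩
      · show e v ∈ closedBall (e c) r
        simpa [mem_closedBall, e.dist_map] using hv
      · show toWeakSpace 𝕜 X (e.symm (e v)) = toWeakSpace 𝕜 X v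
        rw [e.symm_apply_apply]
    · rintro ⟨y, hy, rfl⟩
      refine ⟨e.symm (WeakDual.toStrongDual y), ?_, rfl⟩
      have hmem : WeakDual.toStrongDual y ∈ closedBall (e c) r := hy
      rw [mem_closedBall] at hmem ⊢
      calc dist (e.symm (WeakDual.toStrongDual y)) c
          = dist (e (e.symm (WeakDual.toStrongDual y))) (e c) := (e.dist_map _ _).symm
        _ = dist (WeakDual.toStrongDual y) (e c) := by rw [e.apply_symm_apply]
        _ ≤ r := hmem
  rw [h2]
  exact h1.image hg

/-- Let `X` be a reflexive Banach space of dimension greater than 1, `T` a bounded operator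
on `X`, and `A` a closed ball of `X`.  Then either (i) there is `v ∈ A` with `Tv = 0`, or
(ii) there is `v ∈ A` such that the closed linear span of `Orb_T (Tv)` is a non-trivial
closed invariant subspace of `T`, or (iii) for every sequence `(x n) ∈ A^ℕ`, `A` is contained
in the closed linear span of `{T^k x_ℓ : ℓ ∈ ℕ, 1 ≤ k ≤ ℓ}`. -/
theorem statement10 {𝕜 X : Type*} [RCLike 𝕜] [NormedAddCommGroup X] [NormedSpace 𝕜 X]
    [CompleteSpace X]
    (hrefl : Function.Surjective ⇑(NormedSpace.inclusionInDoubleDual 𝕜 X))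
    (hdim : 1 < Module.rank 𝕜 X)
    (T : X →L[𝕜] X) (c : X) (r : ℝ) (hr : 0 < r)
    (A : Set X) (hA : A = Metric.closedBall c r) :
    (∃ v ∈ A, T v = 0) ∨
    (∃ v ∈ A, ∃ Y : Submodule 𝕜 X,
        Y = (Submodule.span 𝕜 (Set.range fun n : ℕ => (T ^ n) (T v))).topologicalClosure ∧
        Y ≠ ⊥ ∧ Y ≠ ⊤ ∧ ∀ y ∈ Y, T y ∈ Y) ∨
    (∀ x : ℕ → X, (∀ n, x n ∈ A) →
        A ⊆ ((Submodule.span 𝕜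
          {y : X | ∃ k ℓ : ℕ, 1 ≤ k ∧ k ≤ ℓ ∧ y = (T ^ k) (x ℓ)}).topologicalClosure :
            Set X)) := by
  by_cases hiii : ∀ x : ℕ → X, (∀ n, x n ∈ A) →
      A ⊆ ((Submodule.span 𝕜
        {y : X | ∃ k ℓ : ℕ, 1 ≤ k ∧ k ≤ ℓ ∧ y = (T ^ k) (x ℓ)}).topologicalClosure : Set X)
  · exact Or.inr (Or.inr hiii)
  push_neg at hiii
  obtain ⟨x, hxA, hnot⟩ := hiii
  rw [Set.not_subset] at hnot
  obtain ⟨a, haA, haM⟩ := hnot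
  set M := (Submodule.span 𝕜
      {y : X | ∃ k ℓ : ℕ, 1 ≤ k ∧ k ≤ ℓ ∧ y = (T ^ k) (x ℓ)}).topologicalClosure with hMdef
  have hMclosed : IsClosed (M : Set X) := Submodule.isClosed_topologicalClosure _
  have hcpt : IsCompact (⇑(toWeakSpace 𝕜 X) '' A) := by
    rw [hA]; exact aux_cpt' hrefl c r
  set y : ℕ → WeakSpace 𝕜 X := fun n => toWeakSpace 𝕜 X (x n) with hy
  have hmaple : Filter.map y Filter.atTop ≤ Filter.principal (⇑(toWeakSpace 𝕜 X) '' A) := by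
    rw [Filter.le_principal_iff, Filter.mem_map]
    exact Filter.Eventually.of_forall fun n => ⟨x n, hxA n, rfl⟩
  obtain ⟨w, hwA, hw⟩ := hcpt.exists_clusterPt hmaple
  obtain ⟨v, hvA, hveq⟩ := hwA
  have hkey : ∀ k : ℕ, 1 ≤ k → (T ^ k) v ∈ M := by
    intro k hk
    by_contra hTk
    obtain ⟨f, hf0, hfne⟩ := aux_sep' M hMclosed _ hTk
    set g : X →L[𝕜] 𝕜 := f.comp (T ^ k) with hg
    have hgc : Continuous fun z : WeakSpace 𝕜 X => g ((toWeakSpace 𝕜 X).symm z) :=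
      WeakBilin.eval_continuous ((topDualPairing 𝕜 X).flip) g
    have hcl : ClusterPt (g ((toWeakSpace 𝕜 X).symm w))
        (Filter.map (fun z : WeakSpace 𝕜 X => g ((toWeakSpace 𝕜 X).symm z))
          (Filter.map y Filter.atTop)) :=
      hw.map hgc.continuousAt Filter.tendsto_map
    rw [Filter.map_map] at hcl
    have hle : Filter.map ((fun z : WeakSpace 𝕜 X => g ((toWeakSpace 𝕜 X).symm z)) ∘ y)
        Filter.atTop ≤ Filter.principal {(0 : 𝕜)} := by
      rw [Filter.le_principal_iff, Filter.mem_map]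
      apply Filter.mem_of_superset (Filter.mem_atTop k)
      intro n hn
      have hx' : (T ^ k) (x n) ∈ M :=
        Submodule.le_topologicalClosure _ (Submodule.subset_span ⟨k, n, hk, hn, rfl⟩)
      have hsy : (toWeakSpace 𝕜 X).symm (y n) = x n := (toWeakSpace 𝕜 X).symm_apply_apply _
      show g ((toWeakSpace 𝕜 X).symm (y n)) ∈ ({(0 : 𝕜)} : Set 𝕜)
      rw [hsy]
      exact hf0 _ hx'
    have h0 : g ((toWeakSpace 𝕜 X).symm w) ∈ closure ({(0 : 𝕜)} : Set 𝕜) :=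
      mem_closure_iff_clusterPt.2 (hcl.mono hle)
    rw [closure_singleton, Set.mem_singleton_iff] at h0
    rw [← hveq, (toWeakSpace 𝕜 X).symm_apply_apply] at h0
    exact hfne h0
  by_cases hTv : T v = 0
  · exact Or.inl ⟨v, hvA, hTv⟩
  set p := Submodule.span 𝕜 (Set.range fun n : ℕ => (T ^ n) (T v)) with hp
  have hTvmem : T v ∈ p := Submodule.subset_span ⟨0, by simp⟩
  have hTn : ∀ n : ℕ, (T ^ n) (T v) = (T ^ (n + 1)) v := by
    intro n
    rw [pow_succ]
    rfl
  refine Or.inr (Or.inl ⟨v, hvA, p.topologicalClosure, rfl, ?_, ?_, ?_⟩)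
  · intro hbot
    have : T v ∈ p.topologicalClosure := Submodule.le_topologicalClosure _ hTvmem
    rw [hbot, Submodule.mem_bot] at this
    exact hTv this
  · have hple : p.topologicalClosure ≤ M := by
      apply Submodule.topologicalClosure_minimal _ _ hMclosed
      rw [hp, Submodule.span_le]
      rintro _ ⟨n, rfl⟩
      show (T ^ n) (T v) ∈ (M : Set X)
      rw [hTn n]
      exact hkey (n + 1) (Nat.le_add_left 1 n)
    intro htop
    exact haM (hple (htop ▸ Submodule.mem_top))
  · intro z hz
    have hmapsto : Set.MapsTo T (p : Set X) (p : Set X) := by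
      intro u hu
      induction hu using Submodule.span_induction with
      | mem u hu =>
        obtain ⟨n, rfl⟩ := hu
        apply Submodule.subset_span
        exact ⟨n + 1, by show (T ^ (n+1)) (T v) = T ((T ^ n) (T v)); rw [pow_succ']; rfl⟩
      | zero => simp only [map_zero]; exact Submodule.zero_mem p
      | add u₁ u₂ _ _ h1 h2 => simpa using Submodule.add_mem p h1 h2
      | smul a u _ h1 => simpa using Submodule.smul_mem p a h1
    have hz' : z ∈ closure (p : Set X) := hz
    exact map_mem_closure T.continuous hz' hmapsto
end

section
/- Let X be a reflexive Banach space of dimension greater than 1, T a bounded linear operator on X, and A a weakly compact convex subset of X with nonempty norm interior. Then at least one of the following holds: (i) there exists v ∈ A such that Tv = 0; (ii) there exists v ∈ A such that the closed linear span of Orb_T(Tv) is a non-trivial closed invariant subspace of T; (iii) for every sequence (x_n)_{n∈ℕ} ∈ A^ℕ, A is contained in the closed linear span of {T^k x_ℓ : ℓ ∈ ℕ, 1 ≤ k ≤ ℓ}. -/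
open Filter Topology

/-- Let `X` be a reflexive Banach space of dimension greater than 1, `T` a bounded operator
on `X`, and `A` a weakly compact convex subset of `X` with nonempty norm interior.  Then
either (i) there is `v ∈ A` with `Tv = 0`, or (ii) there is `v ∈ A` such that the closed
linear span of `Orb_T (Tv)` is a non-trivial closed invariant subspace of `T`, or (iii) for
every sequence `(x n) ∈ A^ℕ`, `A` is contained in the closed linear span of
`{T^k x_ℓ : ℓ ∈ ℕ, 1 ≤ k ≤ ℓ}`. -/
theorem statement12 {𝕜 X : Type*} [RCLike 𝕜] [NormedAddCommGroup X] [NormedSpace 𝕜 X]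
    [NormedSpace ℝ X] [IsScalarTower ℝ 𝕜 X] [CompleteSpace X]
    (hrefl : Function.Surjective ⇑(NormedSpace.inclusionInDoubleDual 𝕜 X))
    (hdim : 1 < Module.rank 𝕜 X)
    (T : X →L[𝕜] X) (A : Set X)
    (hAcpt : IsCompact (toWeakSpace 𝕜 X '' A)) (hconv : Convex ℝ A)
    (hint : (interior A).Nonempty) :
    (∃ v ∈ A, T v = 0) ∨
    (∃ v ∈ A, ∃ Y : Submodule 𝕜 X,
        Y = (Submodule.span 𝕜 (Set.range fun n : ℕ => (T ^ n) (T v))).topologicalClosure ∧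
        Y ≠ ⊥ ∧ Y ≠ ⊤ ∧ ∀ y ∈ Y, T y ∈ Y) ∨
    (∀ x : ℕ → X, (∀ n, x n ∈ A) →
        A ⊆ ((Submodule.span 𝕜
          {y : X | ∃ k ℓ : ℕ, 1 ≤ k ∧ k ≤ ℓ ∧ y = (T ^ k) (x ℓ)}).topologicalClosure :
            Set X)) := by
  by_cases h1 : ∃ v ∈ A, T v = 0
  · exact Or.inl h1
  by_cases h2 : ∃ v ∈ A, ∃ Y : Submodule 𝕜 X,
      Y = (Submodule.span 𝕜 (Set.range fun n : ℕ => (T ^ n) (T v))).topologicalClosure ∧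
      Y ≠ ⊥ ∧ Y ≠ ⊤ ∧ ∀ y ∈ Y, T y ∈ Y
  · exact Or.inr (Or.inl h2)
  refine Or.inr (Or.inr ?_)
  push_neg at h1
  -- For every `v ∈ A`, the closed span of the orbit of `T v` is everything.
  have htop : ∀ v ∈ A,
      (Submodule.span 𝕜 (Set.range fun n : ℕ => (T ^ n) (T v))).topologicalClosure = ⊤ := by
    intro v hv
    by_contra hne
    apply h2
    set M := (Submodule.span 𝕜 (Set.range fun n : ℕ => (T ^ n) (T v))).topologicalClosure with hM
    have hmemTv : T v ∈ M :=
      (Submodule.le_topologicalClosure _) (Submodule.subset_span ⟨0, by simp⟩)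
    refine ⟨v, hv, M, rfl, ?_, hne, ?_⟩
    · intro hbot
      rw [hbot, Submodule.mem_bot] at hmemTv
      exact h1 v hv hmemTv
    · -- invariance
      intro y hy
      have hker : M ≤ M.comap T.toLinearMap := by
        apply Submodule.topologicalClosure_minimal
        · rw [Submodule.span_le]
          rintro _ ⟨n, rfl⟩
          refine Submodule.mem_comap.2 ?_
          show T ((T ^ n) (T v)) ∈ M
          have heq : T ((T ^ n) (T v)) = (T ^ (n + 1)) (T v) := by
            rw [pow_succ']; rfl
          rw [heq]
          exact (Submodule.le_topologicalClosure _) (Submodule.subset_span ⟨n + 1, rfl⟩)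
        · have hcl : IsClosed (M : Set X) := Submodule.isClosed_topologicalClosure _
          exact hcl.preimage T.continuous
      exact hker hy
  -- Now prove (iii).
  intro x hx a ha
  by_contra hmem
  set S : Submodule 𝕜 X :=
    Submodule.span 𝕜 {y : X | ∃ k ℓ : ℕ, 1 ≤ k ∧ k ≤ ℓ ∧ y = (T ^ k) (x ℓ)} with hS
  set M := S.topologicalClosure with hMdef
  haveI hMc : IsClosed (M : Set X) := S.isClosed_topologicalClosure
  -- Build a functional vanishing on `M` but not at `a`, via the quotient.
  have hq : Submodule.Quotient.mk (p := M) a ≠ 0 := by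
    rw [Ne, Submodule.Quotient.mk_eq_zero]
    exact hmem
  obtain ⟨g, -, hg⟩ := exists_dual_vector 𝕜 (Submodule.Quotient.mk (p := M) a) (norm_ne_zero_iff.2 hq)
  have hmkcont : Continuous (M.mkQ) := by
    apply AddMonoidHomClass.continuous_of_bound M.mkQ 1
    intro y
    simpa using Submodule.Quotient.norm_mk_le M y
  let π : X →L[𝕜] X ⧸ M := ⟨M.mkQ, hmkcont⟩
  let φ : X →L[𝕜] 𝕜 := g.comp π
  have hφM : ∀ y ∈ M, φ y = 0 := by
    intro y hy
    have : π y = 0 := (Submodule.Quotient.mk_eq_zero M).2 hy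
    simp [φ, this]
  have hφa : φ a ≠ 0 := by
    have : φ a = ‖Submodule.Quotient.mk (p := M) a‖ := hg
    rw [this]
    exact_mod_cast norm_ne_zero_iff.2 hq
  -- Weak cluster point of the sequence `x`.
  have hle : Filter.map (fun n => toWeakSpace 𝕜 X (x n)) atTop ≤ 𝓟 (toWeakSpace 𝕜 X '' A) := by
    exact Filter.le_principal_iff.2 (Filter.mem_map.2
      (Filter.Eventually.of_forall fun n => ⟨x n, hx n, rfl⟩))
  obtain ⟨w', hw'A, hw'cl⟩ := hAcpt.exists_clusterPt hle
  obtain ⟨w, hwA, rfl⟩ := hw'A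
  -- φ (T^k w) = 0 for all k ≥ 1.
  have hkey : ∀ k : ℕ, 1 ≤ k → φ ((T ^ k) w) = 0 := by
    intro k hk
    set ψ : X →L[𝕜] 𝕜 := φ.comp (T ^ k) with hψ
    have hc : Continuous fun z : WeakSpace 𝕜 X => ψ ((toWeakSpace 𝕜 X).symm z) :=
      WeakBilin.eval_continuous (topDualPairing 𝕜 X).flip ψ
    have htendsto : Tendsto (fun n => ψ ((toWeakSpace 𝕜 X).symm (toWeakSpace 𝕜 X (x n))))
        atTop (𝓝 0) := by
      apply Tendsto.congr' _ tendsto_const_nhds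
      filter_upwards [eventually_ge_atTop k] with n hn
      have : (T ^ k) (x n) ∈ S := Submodule.subset_span ⟨k, n, hk, hn, rfl⟩
      exact (hφM _ ((Submodule.le_topologicalClosure S) this)).symm
    have hcl : ClusterPt (ψ ((toWeakSpace 𝕜 X).symm (toWeakSpace 𝕜 X w))) (𝓝 0) := by
      refine hw'cl.map hc.continuousAt ?_
      refine Filter.tendsto_map'_iff.2 ?_
      exact htendsto
    have : ψ ((toWeakSpace 𝕜 X).symm (toWeakSpace 𝕜 X w)) = 0 := eq_of_nhds_neBot hcl
    simpa [ψ] using this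
  -- φ vanishes on the dense orbit span of `T w`, hence φ = 0, contradiction.
  have horb : (Submodule.span 𝕜 (Set.range fun n : ℕ => (T ^ n) (T w))).topologicalClosure = ⊤ :=
    htop w hwA
  have hsub : (Submodule.span 𝕜 (Set.range fun n : ℕ => (T ^ n) (T w))).topologicalClosure
      ≤ LinearMap.ker (φ : X →ₗ[𝕜] 𝕜) := by
    apply Submodule.topologicalClosure_minimal
    · rw [Submodule.span_le]
      rintro _ ⟨n, rfl⟩
      have : (T ^ n) (T w) = (T ^ (n + 1)) w := by rw [pow_succ]; rfl
      simp only [SetLike.mem_coe, LinearMap.mem_ker]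
      rw [this]
      exact hkey (n + 1) (Nat.succ_le_succ (Nat.zero_le n))
    · exact ContinuousLinearMap.isClosed_ker φ
  rw [horb] at hsub
  exact hφa (hsub (Submodule.mem_top))
end

section
/- Let X be a Banach space, A a weakly compact convex subset of X with nonempty norm interior such that 0 ∉ A, V a weakly open neighborhood of the origin of X, and suppose a_1, …, a_n are points of the norm interior of A such that A ⊆ ⋃_{i=1}^n (a_i + V). Define B = {x^* ∈ X^* : there exists 1 ≤ i ≤ n such that Re x^*(x) ≥ 0 for all x ∈ A ∩ (a_i + V) and Re x^*(a_i) = 1}. Then B is nonempty, norm-bounded, and closed in the weak* topology of X^*. -/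
open Set Metric

/-- The weak topology on a normed space over `RCLike` field is Hausdorff. -/
lemma weakSpace_t2 {𝕜 X : Type*} [RCLike 𝕜] [NormedAddCommGroup X] [NormedSpace 𝕜 X] :
    T2Space (WeakSpace 𝕜 X) := by
  have hinj : Function.Injective ((topDualPairing 𝕜 X).flip) := by
    intro x y hxy
    by_contra hne
    obtain ⟨f, hf⟩ := SeparatingDual.exists_separating_of_ne (R := 𝕜) hne
    exact hf (congrArg (fun g => g f) hxy)
  exact (WeakBilin.isEmbedding (B := (topDualPairing 𝕜 X).flip) hinj).t2Space

/-- Let `X` be a Banach space, `A` a weakly compact convex subset of `X` with nonempty norm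
interior such that `0 ∉ A`, `V` a weakly open neighborhood of the origin, and `a₁, …, aₙ`
points of the norm interior of `A` with `A ⊆ ⋃ᵢ (aᵢ + V)`.  Then
`B = {x* ∈ X* : ∃ i, Re x*(x) ≥ 0 for all x ∈ A ∩ (aᵢ + V) and Re x*(aᵢ) = 1}` is nonempty,
norm-bounded, and closed in the weak* topology of `X*`. -/
theorem statement13 {𝕜 X : Type*} [RCLike 𝕜] [NormedAddCommGroup X] [NormedSpace 𝕜 X]
    [NormedSpace ℝ X] [IsScalarTower ℝ 𝕜 X] [CompleteSpace X]
    (A : Set X) (hAcpt : IsCompact (toWeakSpace 𝕜 X '' A)) (hconv : Convex ℝ A)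
    (hint : (interior A).Nonempty) (h0A : (0 : X) ∉ A)
    (V : Set X) (hV : IsOpen (toWeakSpace 𝕜 X '' V)) (h0V : (0 : X) ∈ V)
    (n : ℕ) (a : Fin n → X) (ha : ∀ i, a i ∈ interior A)
    (hcover : A ⊆ ⋃ i, (a i + ·) '' V)
    (B : Set (X →L[𝕜] 𝕜))
    (hB : B = {f : X →L[𝕜] 𝕜 | ∃ i,
        (∀ x ∈ A ∩ ((a i + ·) '' V), 0 ≤ RCLike.re (f x)) ∧ RCLike.re (f (a i)) = 1}) :
    B.Nonempty ∧ Bornology.IsBounded B ∧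
      IsClosed (StrongDual.toWeakDual '' B : Set (WeakDual 𝕜 X)) := by
  haveI : T2Space (WeakSpace 𝕜 X) := weakSpace_t2
  -- `V` is norm-open
  have hVopen : IsOpen V := by
    apply WeakSpace.isOpen_of_isOpen (𝕜 := 𝕜)
    have : (toWeakSpaceCLM 𝕜 X '' V : Set (WeakSpace 𝕜 X)) = toWeakSpace 𝕜 X '' V :=
      Set.image_congr fun x _ => rfl
    rw [this]; exact hV
  -- `A` is norm-closed
  have hAclosed : IsClosed A := by
    have himg : A = toWeakSpaceCLM 𝕜 X ⁻¹' (toWeakSpace 𝕜 X '' A) := by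
      ext x
      simp only [Set.mem_preimage, toWeakSpaceCLM_eq_toWeakSpace, Set.mem_image]
      exact ⟨fun hx => ⟨x, hx, rfl⟩,
        fun ⟨y, hy, hxy⟩ => (toWeakSpace 𝕜 X).injective hxy ▸ hy⟩
    rw [himg]
    exact hAcpt.isClosed.preimage (toWeakSpaceCLM 𝕜 X).continuous
  -- `Fin n` is nonempty
  obtain ⟨x₀, hx₀⟩ := hint
  have hx₀A : x₀ ∈ A := interior_subset hx₀
  obtain ⟨i₀, -⟩ := Set.mem_iUnion.mp (hcover hx₀A)
  -- Nonemptiness via Hahn-Banach separation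
  have hBne : B.Nonempty := by
    obtain ⟨f, u, hu0, huA⟩ :=
      RCLike.geometric_hahn_banach_point_closed (𝕜 := 𝕜) hconv hAclosed h0A
    have hu : 0 < u := by simpa using hu0
    have hfa : 0 < RCLike.re (f (a i₀)) := hu.trans (huA _ (interior_subset (ha i₀)))
    refine ⟨(RCLike.re (f (a i₀)))⁻¹ • f, ?_⟩
    rw [hB]
    refine ⟨i₀, ?_, ?_⟩
    · intro x hx
      have h1 : 0 < RCLike.re (f x) := hu.trans (huA _ hx.1)
      have h2 : ((RCLike.re (f (a i₀)))⁻¹ • f) x = (RCLike.re (f (a i₀)))⁻¹ • f x := rfl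
      rw [h2, RCLike.smul_re]
      positivity
    · have h2 : ((RCLike.re (f (a i₀)))⁻¹ • f) (a i₀)
          = (RCLike.re (f (a i₀)))⁻¹ • f (a i₀) := rfl
      rw [h2, RCLike.smul_re]
      exact inv_mul_cancel₀ hfa.ne'
  refine ⟨hBne, ?_, ?_⟩
  · -- Boundedness
    have hδ : ∀ i : Fin n, ∃ δ > 0, ball (a i) δ ⊆ A ∩ (a i + ·) '' V := by
      intro i
      have hWopen : IsOpen ((a i + ·) '' V) := (isOpenMap_add_left (a i)) V hVopen
      have hmem : a i ∈ interior A ∩ (a i + ·) '' V :=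
        ⟨ha i, ⟨0, h0V, by simp⟩⟩
      obtain ⟨δ, hδpos, hball⟩ :=
        Metric.isOpen_iff.mp (isOpen_interior.inter hWopen) _ hmem
      exact ⟨δ, hδpos, hball.trans (Set.inter_subset_inter interior_subset subset_rfl)⟩
    choose δ hδpos hδball using hδ
    rw [isBounded_iff_forall_norm_le]
    refine ⟨∑ i : Fin n, 1 / (δ i / 2), ?_⟩
    intro f hf
    rw [hB] at hf
    obtain ⟨i, hnn, hone⟩ := hf
    -- lower bound on real parts near 0
    have hre : ∀ z : X, ‖z‖ < δ i → -1 ≤ RCLike.re (f z) := by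
      intro z hz
      have hmem : a i + z ∈ ball (a i) (δ i) := by
        simpa [dist_eq_norm] using hz
      have h0 : 0 ≤ RCLike.re (f (a i + z)) := hnn _ (hδball i hmem)
      rw [map_add, map_add, hone] at h0
      linarith
    -- norm bound near 0
    have hsmall : ∀ z : X, ‖z‖ < δ i → ‖f z‖ ≤ 1 := by
      intro z hz
      by_cases hfz : f z = 0
      · simp [hfz]
      · set c : 𝕜 := -((‖f z‖ : 𝕜) / f z) with hc
        have hcn : ‖c‖ = 1 := by
          rw [hc, norm_neg, norm_div, RCLike.norm_ofReal, abs_of_nonneg (norm_nonneg _)]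
          exact div_self (norm_ne_zero_iff.mpr hfz)
        have hfw : f (c • z) = -(‖f z‖ : 𝕜) := by
          rw [map_smul, smul_eq_mul, hc, neg_mul, div_mul_cancel₀ _ hfz]
        have hnw : ‖c • z‖ < δ i := by
          rw [norm_smul, hcn, one_mul]; exact hz
        have := hre _ hnw
        rw [hfw] at this
        simp only [map_neg, RCLike.ofReal_re] at this
        linarith
    have hop : ‖f‖ ≤ 1 / (δ i / 2) := by
      apply ContinuousLinearMap.opNorm_bound_of_ball_bound (half_pos (hδpos i))
      intro z hz
      apply hsmall
      calc ‖z‖ ≤ δ i / 2 := by simpa [dist_eq_norm] using hz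
        _ < δ i := half_lt_self (hδpos i)
    refine hop.trans (Finset.single_le_sum (f := fun j => 1 / (δ j / 2)) (fun j _ => ?_)
      (Finset.mem_univ i))
    have := hδpos j
    positivity
  · -- Weak-star closedness
    have himg : (StrongDual.toWeakDual '' B : Set (WeakDual 𝕜 X)) =
        ⋃ i : Fin n, ({g : WeakDual 𝕜 X | ∀ x ∈ A ∩ (a i + ·) '' V, 0 ≤ RCLike.re (g x)} ∩
          {g : WeakDual 𝕜 X | RCLike.re (g (a i)) = 1}) := by
      ext g
      simp only [Set.mem_image, Set.mem_iUnion, Set.mem_inter_iff, Set.mem_setOf_eq, hB]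
      constructor
      · rintro ⟨f, ⟨i, h1, h2⟩, rfl⟩
        exact ⟨i, h1, h2⟩
      · rintro ⟨i, h1, h2⟩
        exact ⟨StrongDual.toWeakDual.symm g, ⟨i, h1, h2⟩, by simp⟩
    rw [himg]
    apply isClosed_iUnion_of_finite
    intro i
    apply IsClosed.inter
    · have : {g : WeakDual 𝕜 X | ∀ x ∈ A ∩ (a i + ·) '' V, 0 ≤ RCLike.re (g x)} =
          ⋂ x ∈ A ∩ (a i + ·) '' V, {g : WeakDual 𝕜 X | 0 ≤ RCLike.re (g x)} := by
        ext g; simp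
      rw [this]
      exact isClosed_biInter fun x _ =>
        isClosed_le continuous_const (RCLike.continuous_re.comp (WeakDual.eval_continuous x))
    · exact isClosed_eq
        (RCLike.continuous_re.comp (WeakDual.eval_continuous (a i))) continuous_const
end

section
/- Let X be a reflexive Banach space, T a bounded linear operator on X, and A a closed ball of X (A = {x ∈ X : ‖x − c‖ ≤ r}, r > 0) with 0 ∉ A; let A° denote the norm interior of A. Suppose that for every symmetric convex weakly open neighborhood V of the origin of X there exist finitely many points a_1, …, a_n ∈ A° with A ⊆ ⋃_{i=1}^n (a_i + V) such that, setting B(V) = {x^* ∈ X^* : there exists 1 ≤ i ≤ n with Re x^*(x) ≥ 0 for all x ∈ A ∩ (a_i + V) and Re x^*(a_i) = 1}, for every sequence (x_n)_{n∈ℕ} ∈ A^ℕ there exists m ∈ ℕ with B(V) ⊆ ⋃_{ℓ=1}^m ⋃_{k=1}^ℓ {x^* ∈ X^* : |x^*(T^k x_ℓ)| ≥ 1/m}. Then for every sequence (x_n)_{n∈ℕ} ∈ A^ℕ, A is contained in the closed linear span of {T^k x_ℓ : ℓ ∈ ℕ, 1 ≤ k ≤ ℓ}. -/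
/-- Let `X` be a reflexive Banach space, `T` a bounded operator on `X`, and `A` a closed
ball of `X` with `0 ∉ A`.  Suppose that for every symmetric convex weakly open neighborhood
`V` of the origin there exist finitely many points `a₁, …, aₙ` of the norm interior of `A`
with `A ⊆ ⋃ᵢ (aᵢ + V)` such that, setting
`B(V) = {x* : ∃ i, Re x*(x) ≥ 0 for all x ∈ A ∩ (aᵢ + V) and Re x*(aᵢ) = 1}`, for every
sequence `(x n) ∈ A^ℕ` there exists `m ∈ ℕ` with
`B(V) ⊆ ⋃_{ℓ=1}^m ⋃_{k=1}^ℓ {x* : |x*(T^k x_ℓ)| ≥ 1/m}`.  Then for every sequence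
`(x n) ∈ A^ℕ`, `A` is contained in the closed linear span of `{T^k x_ℓ : ℓ ∈ ℕ, 1 ≤ k ≤ ℓ}`. -/
theorem statement14 {𝕜 X : Type*} [RCLike 𝕜] [NormedAddCommGroup X] [NormedSpace 𝕜 X]
    [NormedSpace ℝ X] [IsScalarTower ℝ 𝕜 X] [CompleteSpace X]
    (hrefl : Function.Surjective ⇑(NormedSpace.inclusionInDoubleDual 𝕜 X))
    (T : X →L[𝕜] X) (c : X) (r : ℝ) (hr : 0 < r)
    (A : Set X) (hA : A = Metric.closedBall c r) (h0A : (0 : X) ∉ A)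
    (hmain : ∀ V : Set X,
      IsOpen (toWeakSpace 𝕜 X '' V) → (0 : X) ∈ V → V = -V → Convex ℝ V →
      ∃ (n : ℕ) (a : Fin n → X), (∀ i, a i ∈ interior A) ∧ (A ⊆ ⋃ i, (a i + ·) '' V) ∧
        ∀ x : ℕ → X, (∀ j, x j ∈ A) →
          ∃ m : ℕ, 1 ≤ m ∧
            {f : X →L[𝕜] 𝕜 | ∃ i,
                (∀ y ∈ A ∩ ((a i + ·) '' V), 0 ≤ RCLike.re (f y)) ∧
                RCLike.re (f (a i)) = 1} ⊆
              ⋃ ℓ ∈ Finset.Icc 1 m, ⋃ k ∈ Finset.Icc 1 ℓ,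
                {f : X →L[𝕜] 𝕜 | (m : ℝ)⁻¹ ≤ ‖f ((T ^ k) (x ℓ))‖}) :
    ∀ x : ℕ → X, (∀ j, x j ∈ A) →
      A ⊆ ((Submodule.span 𝕜
        {y : X | ∃ k ℓ : ℕ, 1 ≤ k ∧ k ≤ ℓ ∧ y = (T ^ k) (x ℓ)}).topologicalClosure :
          Set X) := by
  
  intro x hx
  set S : Set X := {y : X | ∃ k ℓ : ℕ, 1 ≤ k ∧ k ≤ ℓ ∧ y = (T ^ k) (x ℓ)} with hS
  set M := (Submodule.span 𝕜 S).topologicalClosure with hM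
  by_contra hcon
  rw [Set.not_subset] at hcon
  obtain ⟨a₀, ha₀A, ha₀M⟩ := hcon
  -- separate a₀ from the closed subspace M
  have hMconv : Convex ℝ (M : Set X) := (M.restrictScalars ℝ).convex
  have hMcl : IsClosed (M : Set X) := Submodule.isClosed_topologicalClosure _
  obtain ⟨fc, u, hfu, hua⟩ := geometric_hahn_banach_closed_point hMconv hMcl ha₀M
  -- fc vanishes on M
  have hfc0 : ∀ z ∈ M, fc z = 0 := by
    intro z hz
    by_contra hne
    have h2 : ((u + |u| + 1) / fc z) • z ∈ (M : Set X) :=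
      (M.restrictScalars ℝ).smul_mem _ hz
    have := hfu _ h2
    rw [map_smul, smul_eq_mul, div_mul_cancel₀ _ hne] at this
    have : |u| + 1 < 0 := by linarith
    nlinarith [abs_nonneg u]
  have hu0 : 0 < u := by
    have h0 := hfu 0 M.zero_mem
    simpa using h0
  have hfa₀ : 0 < fc a₀ := hu0.trans hua
  -- extend to 𝕜-linear and normalize
  set F : X →L[𝕜] 𝕜 := fc.extendTo𝕜'
  have hF0 : ∀ z ∈ M, F z = 0 := by
    intro z hz
    rw [show F z = _ from ContinuousLinearMap.extendTo𝕜'_apply fc z, hfc0 z hz,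
      hfc0 _ (M.smul_mem (RCLike.I : 𝕜) hz)]
    simp
  have hFre : ∀ v : X, RCLike.re (F v) = fc v := by
    intro v
    rw [show F v = _ from ContinuousLinearMap.extendTo𝕜'_apply fc v]
    simp [RCLike.mul_re]
  set f : X →L[𝕜] 𝕜 := (fc a₀)⁻¹ • F with hf
  have hfre : ∀ v : X, RCLike.re (f v) = (fc a₀)⁻¹ * fc v := by
    intro v
    rw [hf, ContinuousLinearMap.smul_apply, RCLike.smul_re, hFre]
  have hf0 : ∀ z ∈ M, f z = 0 := fun z hz => by simp [hf, hF0 z hz]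
  have hfa₀1 : RCLike.re (f a₀) = 1 := by
    rw [hfre, inv_mul_cancel₀ hfa₀.ne']
  -- the weak neighborhood
  set V : Set X := {v : X | |RCLike.re (f v)| < 1/2} with hV
  have hVopen : IsOpen (toWeakSpace 𝕜 X '' V) := by
    have hcont : Continuous fun w : WeakSpace 𝕜 X =>
        |RCLike.re ((topDualPairing 𝕜 X).flip w f)| :=
      (continuous_abs.comp RCLike.continuous_re).comp (WeakBilin.eval_continuous _ f)
    have heq : toWeakSpace 𝕜 X '' V
        = (fun w : WeakSpace 𝕜 X => |RCLike.re ((topDualPairing 𝕜 X).flip w f)|) ⁻¹'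
          (Set.Iio (1/2)) := by
      ext w
      constructor
      · rintro ⟨v, hv, rfl⟩; exact hv
      · intro hw; exact ⟨(toWeakSpace 𝕜 X).symm w, hw, by simp⟩
    rw [heq]
    exact isOpen_Iio.preimage hcont
  have hV0 : (0 : X) ∈ V := by simp [hV]
  have hVsymm : V = -V := by
    ext v
    simp only [hV, Set.mem_neg, Set.mem_setOf_eq, map_neg, abs_neg]
  have hVconv : Convex ℝ V := by
    have : V = (RCLike.reCLM.comp (f.restrictScalars ℝ)).toLinearMap ⁻¹'
        (Set.Ioo (-(1/2)) (1/2)) := by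
      ext v
      simp [hV, abs_lt]
    rw [this]
    exact (convex_Ioo _ _).linear_preimage _
  obtain ⟨n, a, haint, hcov, hB⟩ := hmain V hVopen hV0 hVsymm hVconv
  obtain ⟨m, hm1, hsub⟩ := hB x hx
  -- find the index covering a₀
  obtain ⟨i, v, hvV, hva⟩ : ∃ i, ∃ v ∈ V, a i + v = a₀ := by
    have := hcov ha₀A
    simp only [Set.mem_iUnion, Set.mem_image] at this
    obtain ⟨i, v, hvV, hva⟩ := this
    exact ⟨i, v, hvV, hva⟩
  have hrei : (1:ℝ)/2 < RCLike.re (f (a i)) := by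
    have h1 : RCLike.re (f (a i)) + RCLike.re (f v) = 1 := by
      rw [← map_add, ← map_add, hva, hfa₀1]
    have h2 : |RCLike.re (f v)| < 1/2 := hvV
    rw [abs_lt] at h2
    linarith
  set t : ℝ := RCLike.re (f (a i)) with ht
  have ht0 : 0 < t := by linarith
  set g : X →L[𝕜] 𝕜 := t⁻¹ • f with hg
  have hgmem : g ∈ {f : X →L[𝕜] 𝕜 | ∃ i,
      (∀ y ∈ A ∩ ((a i + ·) '' V), 0 ≤ RCLike.re (f y)) ∧
      RCLike.re (f (a i)) = 1} := by
    refine ⟨i, ?_, ?_⟩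
    · rintro y ⟨-, w, hwV, rfl⟩
      have hw : |RCLike.re (f w)| < 1/2 := hwV
      rw [abs_lt] at hw
      have : RCLike.re (f (a i + w)) = t + RCLike.re (f w) := by
        rw [map_add, map_add, ht]
      rw [hg]
      simp only [ContinuousLinearMap.smul_apply, RCLike.smul_re]
      rw [this]
      have h3 : 0 ≤ t + RCLike.re (f w) := by linarith
      exact mul_nonneg (inv_nonneg.mpr ht0.le) h3
    · rw [hg]
      simp only [ContinuousLinearMap.smul_apply, RCLike.smul_re, ← ht]
      exact inv_mul_cancel₀ ht0.ne'
  have := hsub hgmem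
  simp only [Set.mem_iUnion, Finset.mem_Icc, Set.mem_setOf_eq] at this
  obtain ⟨ℓ, ⟨hℓ1, hℓm⟩, k, ⟨hk1, hkℓ⟩, hineq⟩ := this
  have hmem : (T ^ k) (x ℓ) ∈ M :=
    Submodule.le_topologicalClosure _ (Submodule.subset_span ⟨k, ℓ, hk1, hkℓ, rfl⟩)
  have hg0 : g ((T ^ k) (x ℓ)) = 0 := by
    rw [hg]
    rw [ContinuousLinearMap.smul_apply, hf0 _ hmem, smul_zero]
  rw [hg0] at hineq
  simp at hineq
  have : (0:ℝ) < (m : ℝ)⁻¹ := by positivity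
  linarith
end

section
/- Let X be a Banach space, T a bounded linear operator on X, A a bounded subset of X, and B a subset of X^*. Suppose that for every sequence (x_n)_{n∈ℕ} ∈ A^ℕ there exists m ∈ ℕ such that B ⊆ ⋃_{ℓ=1}^m ⋃_{k=1}^ℓ {x^* ∈ X^* : |x^*(T^k x_ℓ)| ≥ 1/m}, and define m((x_n)_{n∈ℕ}) to be the minimal such m. Then the function m : A^ℕ → ℕ is sequentially lower semicontinuous with respect to coordinatewise weak convergence: if (x_{j,n})_{n∈ℕ} ∈ A^ℕ for each j ∈ ℕ, (x_n)_{n∈ℕ} ∈ A^ℕ, and x_{j,ℓ} → x_ℓ weakly as j → ∞ for every ℓ ∈ ℕ, then m((x_{j,n})_{n∈ℕ}) ≥ m((x_n)_{n∈ℕ}) for all sufficiently large j. -/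
open Filter Topology

/-- Let `X` be a Banach space, `T` a bounded operator on `X`, `A` a bounded subset of `X`,
and `B ⊆ X*`.  Suppose that for every sequence `(x n) ∈ A^ℕ` there is `m ∈ ℕ` with
`B ⊆ ⋃_{ℓ=1}^m ⋃_{k=1}^ℓ {x* : |x*(T^k x_ℓ)| ≥ 1/m}`, and let `μ (x) ` denote the minimal
such `m`.  Then `μ` is sequentially lower semicontinuous with respect to coordinatewise weak
convergence: if `x_{j,ℓ} → x_ℓ` weakly as `j → ∞` for every `ℓ`, then
`μ (x_j) ≥ μ (x)` for all sufficiently large `j`. -/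
theorem statement15 {𝕜 X : Type*} [RCLike 𝕜] [NormedAddCommGroup X] [NormedSpace 𝕜 X]
    [CompleteSpace X]
    (T : X →L[𝕜] X) (A : Set X) (hA : Bornology.IsBounded A)
    (B : Set (X →L[𝕜] 𝕜))
    (hex : ∀ x : ℕ → X, (∀ n, x n ∈ A) → ∃ m : ℕ, 1 ≤ m ∧
        B ⊆ ⋃ ℓ ∈ Finset.Icc 1 m, ⋃ k ∈ Finset.Icc 1 ℓ,
          {f : X →L[𝕜] 𝕜 | (m : ℝ)⁻¹ ≤ ‖f ((T ^ k) (x ℓ))‖})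
    (μ : (ℕ → X) → ℕ)
    (hμ : ∀ x : ℕ → X, (∀ n, x n ∈ A) →
        (1 ≤ μ x ∧
          B ⊆ ⋃ ℓ ∈ Finset.Icc 1 (μ x), ⋃ k ∈ Finset.Icc 1 ℓ,
            {f : X →L[𝕜] 𝕜 | ((μ x : ℝ))⁻¹ ≤ ‖f ((T ^ k) (x ℓ))‖}) ∧
        ∀ m : ℕ, 1 ≤ m →
          (B ⊆ ⋃ ℓ ∈ Finset.Icc 1 m, ⋃ k ∈ Finset.Icc 1 ℓ,
            {f : X →L[𝕜] 𝕜 | (m : ℝ)⁻¹ ≤ ‖f ((T ^ k) (x ℓ))‖}) → μ x ≤ m)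
    (xj : ℕ → ℕ → X) (hxj : ∀ j n, xj j n ∈ A)
    (x : ℕ → X) (hx : ∀ n, x n ∈ A)
    (hconv : ∀ ℓ : ℕ, ∀ f : X →L[𝕜] 𝕜,
        Tendsto (fun j => f (xj j ℓ)) atTop (𝓝 (f (x ℓ)))) :
    ∀ᶠ j in atTop, μ x ≤ μ (xj j) := by
  by_contra hcon
  rw [Filter.not_eventually] at hcon
  -- pigeonhole over the finitely many possible values of μ (xj j) < μ x
  have key : ∃ m' ∈ Finset.Ico 1 (μ x), ∃ᶠ j in atTop, μ (xj j) = m' := by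
    by_contra hk
    push_neg at hk
    have hev : ∀ᶠ j in atTop, ∀ m' ∈ Finset.Ico 1 (μ x), μ (xj j) ≠ m' := by
      rw [Filter.eventually_all_finset]
      intro m' hm'
      have := hk m' hm'
      exact this
    obtain ⟨j, hj1, hj2⟩ := (hcon.and_eventually hev).exists
    exact hj2 (μ (xj j)) (Finset.mem_Ico.mpr ⟨((hμ (xj j) (hxj j)).1).1, lt_of_not_ge hj1⟩) rfl
  obtain ⟨m', hm', hfreq⟩ := key
  rw [Finset.mem_Ico] at hm'
  -- show B is covered with parameter m' for the limit sequence x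
  have hcov : B ⊆ ⋃ ℓ ∈ Finset.Icc 1 m', ⋃ k ∈ Finset.Icc 1 ℓ,
      {f : X →L[𝕜] 𝕜 | (m' : ℝ)⁻¹ ≤ ‖f ((T ^ k) (x ℓ))‖} := by
    intro f hf
    -- for frequently many j, f lies in the covering with parameter m' for xj j
    have hfr : ∃ᶠ j in atTop, ∃ ℓ ∈ Finset.Icc 1 m', ∃ k ∈ Finset.Icc 1 ℓ,
        (m' : ℝ)⁻¹ ≤ ‖f ((T ^ k) (xj j ℓ))‖ := by
      refine hfreq.mono fun j hj => ?_
      have hB := ((hμ (xj j) (hxj j)).1).2 hf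
      rw [hj] at hB
      simp only [Set.mem_iUnion, Set.mem_setOf_eq] at hB
      obtain ⟨ℓ, hℓ, k, hk, h⟩ := hB
      exact ⟨ℓ, hℓ, k, hk, h⟩
    -- pigeonhole over the finitely many pairs (ℓ, k)
    have key2 : ∃ ℓ ∈ Finset.Icc 1 m', ∃ k ∈ Finset.Icc 1 ℓ,
        ∃ᶠ j in atTop, (m' : ℝ)⁻¹ ≤ ‖f ((T ^ k) (xj j ℓ))‖ := by
      by_contra hk2
      push_neg at hk2
      have hev : ∀ᶠ j in atTop, ∀ ℓ ∈ Finset.Icc 1 m', ∀ k ∈ Finset.Icc 1 ℓ,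
          ¬ ((m' : ℝ)⁻¹ ≤ ‖f ((T ^ k) (xj j ℓ))‖) := by
        rw [Filter.eventually_all_finset]
        intro ℓ hℓ
        rw [Filter.eventually_all_finset]
        intro k hk
        have := hk2 ℓ hℓ k hk
        exact this.mono fun j hj => not_le.mpr hj
      obtain ⟨j, hj1, hj2⟩ := (hfr.and_eventually hev).exists
      obtain ⟨ℓ, hℓ, k, hk, h⟩ := hj1
      exact hj2 ℓ hℓ k hk h
    obtain ⟨ℓ, hℓ, k, hk, hfr2⟩ := key2
    -- pass to the limit using weak convergence applied to f ∘ T^k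
    have htend : Tendsto (fun j => ‖f ((T ^ k) (xj j ℓ))‖) atTop
        (𝓝 ‖f ((T ^ k) (x ℓ))‖) := by
      have := hconv ℓ (f.comp (T ^ k))
      simpa using this.norm
    have hlim : (m' : ℝ)⁻¹ ≤ ‖f ((T ^ k) (x ℓ))‖ := by
      by_contra hlt
      push_neg at hlt
      have : ∀ᶠ j in atTop, ‖f ((T ^ k) (xj j ℓ))‖ < (m' : ℝ)⁻¹ :=
        htend.eventually (eventually_lt_nhds hlt)
      obtain ⟨j, hj1, hj2⟩ := (hfr2.and_eventually this).exists
      exact absurd hj1 (not_le.mpr hj2)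
    simp only [Set.mem_iUnion, Set.mem_setOf_eq]
    exact ⟨ℓ, hℓ, k, hk, hlim⟩
  exact absurd ((hμ x hx).2 m' hm'.1 hcov) (not_le.mpr hm'.2)
end
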